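/- arXiv:math-ph/0601063 — 8 statements merged into one kernel-verified Lean document; each statement's English description precedes it below -/
import Mathlib

section
/- For 1 ≤ p ≤ ∞, the bound ‖T‖_{p-p} ≤ n^{1-1/p} of Theorem 1 is attained by the trace map tr : M_n(ℂ) → ℂ (viewed as a completely positive trace preserving map into the 1×1 matrices): indeed |tr(𝟙)| = n = n^{1-1/p} ‖𝟙‖_p, so sup_{A≠0} |tr(A)| / ‖A‖_p = n^{1-1/p}. -/
open scoped ENNReal ComplexOrder

/-- The singular values of a complex square matrix `A`, i.e. the (square roots of the)
eigenvalues of `Aᴴ * A`. -/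
noncomputable def singularValues {n : ℕ} (A : Matrix (Fin n) (Fin n) ℂ) : Fin n → ℝ :=
  fun i => Real.sqrt ((Matrix.posSemidef_conjTranspose_mul_self A).isHermitian.eigenvalues i)

/-- The Schatten `p`-norm `‖A‖_p = (tr |A|^p)^{1/p}`; for `p = ∞` it is the operator
(largest singular value) norm. -/
noncomputable def schattenNorm {n : ℕ} (p : ℝ≥0∞) (A : Matrix (Fin n) (Fin n) ℂ) : ℝ :=
  if p = ⊤ then ⨆ i, singularValues A i
  else (∑ i, singularValues A i ^ p.toReal) ^ (1 / p.toReal)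

/-- A linear map between matrix algebras is positive if it maps positive semi-definite
matrices to positive semi-definite matrices. -/
def IsPositiveMatrixMap {n r : ℕ} (T : Matrix (Fin n) (Fin n) ℂ →ₗ[ℂ] Matrix (Fin r) (Fin r) ℂ) :
    Prop :=
  ∀ A : Matrix (Fin n) (Fin n) ℂ, A.PosSemidef → (T A).PosSemidef

/-- A linear map between matrix algebras is trace preserving if `tr T(A) = tr A` for all `A`. -/
def IsTracePreservingMap {n r : ℕ}
    (T : Matrix (Fin n) (Fin n) ℂ →ₗ[ℂ] Matrix (Fin r) (Fin r) ℂ) : Prop :=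
  ∀ A : Matrix (Fin n) (Fin n) ℂ, (T A).trace = A.trace

open Matrix in
set_option maxHeartbeats 1000000 in
/-- Trace is bounded by the sum of singular values. -/
lemma abs_trace_le_sum_singularValues {n : ℕ} (A : Matrix (Fin n) (Fin n) ℂ) :
    ‖A.trace‖ ≤ ∑ i, singularValues A i := by
  have hB := (Matrix.posSemidef_conjTranspose_mul_self A).isHermitian
  set V : Matrix (Fin n) (Fin n) ℂ := (hB.eigenvectorUnitary : Matrix (Fin n) (Fin n) ℂ) with hV
  have hVV : V * star V = 1 := (Matrix.mem_unitaryGroup_iff).mp hB.eigenvectorUnitary.2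
  set C : Matrix (Fin n) (Fin n) ℂ := star V * A * V with hC
  have htr : A.trace = C.trace := by
    rw [hC, Matrix.trace_mul_cycle, hVV, one_mul]
  have hCC : Cᴴ * C = star V * (Aᴴ * A) * V := by
    have hsC : Cᴴ = star V * Aᴴ * V := by
      simp [hC, Matrix.star_eq_conjTranspose, Matrix.conjTranspose_mul, mul_assoc]
    rw [hsC, hC]
    calc star V * Aᴴ * V * (star V * A * V)
        = star V * Aᴴ * (V * star V) * (A * V) := by simp only [mul_assoc]
      _ = star V * (Aᴴ * A) * V := by rw [hVV, mul_one]; simp only [mul_assoc]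
  have hdiag : Cᴴ * C = Matrix.diagonal (RCLike.ofReal ∘ hB.eigenvalues) := by
    rw [hCC]
    have := Matrix.IsHermitian.conjStarAlgAut_star_eigenvectorUnitary hB
    rwa [Unitary.conjStarAlgAut_star_apply] at this
  have hcol : ∀ j, ∑ i, Complex.normSq (C i j) = hB.eigenvalues j := by
    intro j
    have h1 : (Cᴴ * C) j j = (hB.eigenvalues j : ℂ) := by
      rw [hdiag]; simp
    have h2 : (Cᴴ * C) j j = ∑ i, (Complex.normSq (C i j) : ℂ) := by
      simp [Matrix.mul_apply, Matrix.conjTranspose_apply, Complex.normSq_eq_conj_mul_self]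
    rw [h2] at h1
    exact_mod_cast h1
  have hdiag_le : ∀ j, ‖C j j‖ ≤ singularValues A j := by
    intro j
    have h1 : Complex.normSq (C j j) ≤ hB.eigenvalues j := by
      rw [← hcol j]
      exact Finset.single_le_sum (f := fun i => Complex.normSq (C i j))
        (fun i _ => Complex.normSq_nonneg _) (Finset.mem_univ j)
    have : ‖C j j‖ = Real.sqrt (Complex.normSq (C j j)) :=
      (Complex.sq_norm (C j j)) ▸ (Real.sqrt_sq (norm_nonneg _)).symm
    rw [this]
    exact Real.sqrt_le_sqrt h1
  calc ‖A.trace‖ = ‖∑ j, C j j‖ := by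
        rw [htr]; rfl
    _ ≤ ∑ j, ‖C j j‖ := norm_sum_le _ _
    _ ≤ ∑ j, singularValues A j := Finset.sum_le_sum fun j _ => hdiag_le j

lemma singularValues_nonneg {n : ℕ} (A : Matrix (Fin n) (Fin n) ℂ) (i : Fin n) :
    0 ≤ singularValues A i := Real.sqrt_nonneg _

open Matrix in
lemma singularValues_one {n : ℕ} (i : Fin n) :
    singularValues (1 : Matrix (Fin n) (Fin n) ℂ) i = 1 := by
  have h1 : ((Matrix.posSemidef_conjTranspose_mul_self
      (1 : Matrix (Fin n) (Fin n) ℂ)).isHermitian).eigenvalues i = 1 := by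
    rw [Matrix.IsHermitian.eigenvalues_eq]
    have h : ((1 : Matrix (Fin n) (Fin n) ℂ)ᴴ * 1) *ᵥ
        ⇑(((Matrix.posSemidef_conjTranspose_mul_self
          (1 : Matrix (Fin n) (Fin n) ℂ)).isHermitian).eigenvectorBasis i) =
        ⇑(((Matrix.posSemidef_conjTranspose_mul_self
          (1 : Matrix (Fin n) (Fin n) ℂ)).isHermitian).eigenvectorBasis i) := by
      simp
    rw [h, dotProduct_comm, ← EuclideanSpace.inner_eq_star_dotProduct, inner_self_eq_norm_sq_to_K,
      ((Matrix.posSemidef_conjTranspose_mul_self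
        (1 : Matrix (Fin n) (Fin n) ℂ)).isHermitian).eigenvectorBasis.orthonormal.1 i]
    simp
  simp only [singularValues]
  rw [h1, Real.sqrt_one]

/-- The bound `‖T‖_{p-p} ≤ n^{1-1/p}` is attained by the trace map `tr : M_n(ℂ) → ℂ`
(a 1×1 matrix being identified with a complex number, whose `p`-norm is its modulus):
`|tr(A)| ≤ n^{1-1/p} ‖A‖_p` for all `A`, and `|tr 𝟙| = n^{1-1/p} ‖𝟙‖_p = n`. -/
theorem trace_map_attains_bound (n : ℕ) (hn : 0 < n) (p : ℝ≥0∞) (hp : 1 ≤ p) :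
    (∀ A : Matrix (Fin n) (Fin n) ℂ,
        ‖A.trace‖ ≤ (n : ℝ) ^ ((1 : ℝ) - 1 / p.toReal) * schattenNorm p A) ∧
      ‖Matrix.trace (1 : Matrix (Fin n) (Fin n) ℂ)‖
        = (n : ℝ) ^ ((1 : ℝ) - 1 / p.toReal) * schattenNorm p (1 : Matrix (Fin n) (Fin n) ℂ) ∧
      ‖Matrix.trace (1 : Matrix (Fin n) (Fin n) ℂ)‖ = (n : ℝ) := by
  have hNe : Nonempty (Fin n) := Fin.pos_iff_nonempty.mp hn
  have hnR : (0 : ℝ) < n := Nat.cast_pos.mpr hn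
  have htr1 : ‖Matrix.trace (1 : Matrix (Fin n) (Fin n) ℂ)‖ = (n : ℝ) := by
    simp [Matrix.trace_one]
  refine ⟨?_, ?_, htr1⟩
  · intro A
    by_cases hpt : p = ⊤
    · subst hpt
      simp only [schattenNorm, if_pos rfl, ENNReal.toReal_top, div_zero, sub_zero,
        Real.rpow_one]
      calc ‖A.trace‖ ≤ ∑ i, singularValues A i := abs_trace_le_sum_singularValues A
        _ ≤ ∑ _i : Fin n, ⨆ j, singularValues A j := by
            refine Finset.sum_le_sum fun i _ => ?_
            exact le_ciSup (Set.Finite.bddAbove (Set.finite_range _)) i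
        _ = (n : ℝ) * ⨆ j, singularValues A j := by
            simp [Finset.sum_const, nsmul_eq_mul]
    · have hpr : (1 : ℝ) ≤ p.toReal := by
        rw [← ENNReal.toReal_one]
        exact ENNReal.toReal_mono hpt hp
      simp only [schattenNorm, if_neg hpt]
      have hH := Real.inner_le_weight_mul_Lp_of_nonneg Finset.univ hpr
        (fun _ : Fin n => (1 : ℝ)) (singularValues A)
        (fun _ => zero_le_one) (singularValues_nonneg A)
      simp only [one_mul, Finset.sum_const, Finset.card_univ, Fintype.card_fin,
        nsmul_eq_mul, mul_one] at hH
      calc ‖A.trace‖ ≤ ∑ i, singularValues A i := abs_trace_le_sum_singularValues A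
        _ ≤ (n : ℝ) ^ (1 - (p.toReal)⁻¹) * (∑ i, singularValues A i ^ p.toReal) ^ (p.toReal)⁻¹ := hH
        _ = (n : ℝ) ^ ((1:ℝ) - 1 / p.toReal) * (∑ i, singularValues A i ^ p.toReal) ^ (1 / p.toReal) := by
            rw [one_div]
  · by_cases hpt : p = ⊤
    · subst hpt
      rw [htr1]
      simp [schattenNorm, singularValues_one, ciSup_const]
    · have hpr : (0 : ℝ) < p.toReal := by
        have : (1 : ℝ) ≤ p.toReal := by
          rw [← ENNReal.toReal_one]; exact ENNReal.toReal_mono hpt hp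
        linarith
      simp only [schattenNorm, if_neg hpt, singularValues_one, htr1]
      rw [Real.one_rpow]
      simp only [Finset.sum_const, Finset.card_univ, Fintype.card_fin, nsmul_eq_mul, mul_one]
      rw [← Real.rpow_add hnR, sub_add_cancel, Real.rpow_one]
end

section
/- Let T : M_n(ℂ) → M_n(ℂ) be a linear map that is positive, trace preserving and unital, and let T* be its adjoint with respect to the Hilbert–Schmidt inner product ⟨A, B⟩ = tr(A*B) on M_n(ℂ). Then the positive semi-definite operator T* ∘ T on the Hilbert space M_n(ℂ) has operator norm exactly 1: 𝟙 is an eigenvector of T* ∘ T with eigenvalue 1, and every eigenvalue of T* ∘ T is at most 1. Consequently ‖T(A)‖_2 ≤ ‖A‖_2 for all A. -/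
open scoped ENNReal ComplexOrder Matrix

open scoped ComplexOrder Matrix
open Matrix

variable {n : ℕ}

lemma psd_trace_nonneg {M : Matrix (Fin n) (Fin n) ℂ} (hM : M.PosSemidef) : 0 ≤ M.trace := by
  refine Finset.sum_nonneg fun i _ => ?_
  have := hM.dotProduct_mulVec_nonneg (Pi.single i 1)
  simpa [Matrix.mulVec_single, dotProduct, Pi.single_apply] using this

lemma psd_trace_mul_nonneg {A B : Matrix (Fin n) (Fin n) ℂ} (hA : A.PosSemidef)
    (hB : B.PosSemidef) : 0 ≤ (A * B).trace := by
  obtain ⟨X, hX⟩ : ∃ X : Matrix (Fin n) (Fin n) ℂ, B = star X * X := by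
    open scoped MatrixOrder Matrix.Norms.L2Operator in
    exact CStarAlgebra.nonneg_iff_eq_star_mul_self.mp hB.nonneg
  rw [hX, ← Matrix.mul_assoc, Matrix.trace_mul_cycle, Matrix.star_eq_conjTranspose]
  exact psd_trace_nonneg (hA.mul_mul_conjTranspose_same X)

lemma trace_ctm (X : Matrix (Fin n) (Fin n) ℂ) :
    (Xᴴ * X).trace = ((∑ j, ∑ i, Complex.normSq (X i j) : ℝ) : ℂ) := by
  push_cast
  simp [Matrix.trace, Matrix.diag, Matrix.mul_apply, Matrix.conjTranspose_apply,
    Complex.normSq_eq_conj_mul_self]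

lemma trace_ctm_pos {X : Matrix (Fin n) (Fin n) ℂ} (hX : X ≠ 0) :
    0 < ((Xᴴ * X).trace).re := by
  rw [trace_ctm, Complex.ofReal_re]
  have h1 : ∃ i j, X i j ≠ 0 := by
    by_contra hc
    push_neg at hc
    exact hX (Matrix.ext fun i j => hc i j)
  obtain ⟨i, j, hij⟩ := h1
  refine Finset.sum_pos' (fun j _ => Finset.sum_nonneg fun i _ => Complex.normSq_nonneg _) ?_
  refine ⟨j, Finset.mem_univ _, Finset.sum_pos' (fun i _ => Complex.normSq_nonneg _) ?_⟩
  exact ⟨i, Finset.mem_univ _, by simpa [Complex.normSq_pos] using hij⟩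

variable {n : ℕ}

/-- Rank-one spectral projections. -/
noncomputable def specProj {H : Matrix (Fin n) (Fin n) ℂ} (hH : H.IsHermitian) (i : Fin n) :
    Matrix (Fin n) (Fin n) ℂ :=
  Matrix.of fun k l => (hH.eigenvectorUnitary : Matrix (Fin n) (Fin n) ℂ) k i *
    star ((hH.eigenvectorUnitary : Matrix (Fin n) (Fin n) ℂ) l i)

lemma specProj_posSemidef {H : Matrix (Fin n) (Fin n) ℂ} (hH : H.IsHermitian) (i : Fin n) :
    (specProj hH i).PosSemidef := by
  set U := (hH.eigenvectorUnitary : Matrix (Fin n) (Fin n) ℂ) with hU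
  refine Matrix.posSemidef_iff_dotProduct_mulVec.mpr ⟨?_, ?_⟩
  · ext k l
    simp only [specProj, Matrix.conjTranspose_apply, Matrix.of_apply, star_mul', star_star]
    ring
  · intro x
    have key : dotProduct (star x) (specProj hH i *ᵥ x) =
        star (∑ l, star (U l i) * x l) * (∑ l, star (U l i) * x l) := by
      simp only [dotProduct, mulVec, specProj, Matrix.of_apply, Pi.star_apply,
        star_sum, star_mul', star_star, Finset.sum_mul, Finset.mul_sum]
      simp only [← hU]
      rw [Finset.sum_comm]
      refine Finset.sum_congr rfl fun k _ => Finset.sum_congr rfl fun l _ => ?_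
      ring
    rw [key]
    exact star_mul_self_nonneg _

lemma specProj_sum {H : Matrix (Fin n) (Fin n) ℂ} (hH : H.IsHermitian) :
    ∑ i, specProj hH i = 1 := by
  set U := (hH.eigenvectorUnitary : Matrix (Fin n) (Fin n) ℂ) with hU
  have h2 : U * star U = 1 := Matrix.mem_unitaryGroup_iff.mp hH.eigenvectorUnitary.2
  ext k l
  have := congrFun (congrFun h2 k) l
  simp only [Matrix.mul_apply, Matrix.star_apply] at this
  simpa [Matrix.sum_apply, specProj, -Matrix.IsHermitian.eigenvectorUnitary_apply] using this

lemma specProj_trace {H : Matrix (Fin n) (Fin n) ℂ} (hH : H.IsHermitian) (i : Fin n) :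
    (specProj hH i).trace = 1 := by
  set U := (hH.eigenvectorUnitary : Matrix (Fin n) (Fin n) ℂ) with hU
  have h1 : star U * U = 1 := Matrix.mem_unitaryGroup_iff'.mp hH.eigenvectorUnitary.2
  have := congrFun (congrFun h1 i) i
  simp only [Matrix.mul_apply, Matrix.star_apply, Matrix.one_apply_eq] at this
  rw [Matrix.trace]
  simp only [Matrix.diag, specProj, Matrix.of_apply]
  rw [← this]
  exact Finset.sum_congr rfl fun k _ => mul_comm _ _

lemma specProj_decomp {H : Matrix (Fin n) (Fin n) ℂ} (hH : H.IsHermitian) :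
    H = ∑ i, (hH.eigenvalues i : ℂ) • specProj hH i := by
  set U := (hH.eigenvectorUnitary : Matrix (Fin n) (Fin n) ℂ) with hU
  conv_lhs => rw [hH.spectral_theorem, Unitary.conjStarAlgAut_apply]
  ext k l
  simp only [Matrix.mul_apply, Matrix.sum_apply, Matrix.smul_apply, specProj, Matrix.of_apply,
    Matrix.diagonal_apply, Function.comp_apply, Matrix.star_apply, smul_eq_mul]
  simp only [mul_ite, mul_zero, Finset.sum_ite_eq', Finset.mem_univ, if_true]
  simp only [← hU]
  exact Finset.sum_congr rfl fun i _ => (mul_right_comm _ _ _).trans (mul_comm _ _)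

lemma trace_sq_eq_sum_sq {H : Matrix (Fin n) (Fin n) ℂ} (hH : H.IsHermitian) :
    (H * H).trace = ((∑ i, hH.eigenvalues i ^ 2 : ℝ) : ℂ) := by
  set U := (hH.eigenvectorUnitary : Matrix (Fin n) (Fin n) ℂ) with hU
  have h2 : U * star U = 1 := Matrix.mem_unitaryGroup_iff.mp hH.eigenvectorUnitary.2
  have hd : star U * H * U = Matrix.diagonal (RCLike.ofReal ∘ hH.eigenvalues) :=
    by rw [← hH.conjStarAlgAut_star_eigenvectorUnitary, Unitary.conjStarAlgAut_apply,
      Unitary.coe_star, star_star]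
  have key : (star U * H * U) * (star U * H * U) = star U * (H * H) * U := by
    have h3 : U * (star U * (H * U)) = H * U := by
      rw [← Matrix.mul_assoc, h2, Matrix.one_mul]
    simp only [Matrix.mul_assoc, h3]
  have t1 : ((star U * H * U) * (star U * H * U)).trace = (H * H).trace := by
    rw [key, Matrix.trace_mul_cycle, ← Matrix.mul_assoc, h2, Matrix.one_mul]
  rw [← t1, hd, Matrix.diagonal_mul_diagonal, Matrix.trace_diagonal]
  push_cast
  refine Finset.sum_congr rfl fun i _ => ?_
  simp [Function.comp, pow_two]

lemma ds_ineq {m : ℕ} (lam : Fin m → ℝ) (M : Fin m → Fin m → ℝ)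
    (hpos : ∀ i j, 0 ≤ M i j) (hrow : ∀ i, ∑ j, M i j = 1) (hcol : ∀ j, ∑ i, M i j = 1) :
    ∑ i, ∑ j, lam i * lam j * M i j ≤ ∑ i, lam i ^ 2 := by
  have step1 : ∑ i, ∑ j, lam i * lam j * M i j ≤
      ∑ i, ∑ j, (lam i ^ 2 / 2 * M i j + lam j ^ 2 / 2 * M i j) := by
    refine Finset.sum_le_sum fun i _ => Finset.sum_le_sum fun j _ => ?_
    nlinarith [sq_nonneg (lam i - lam j), hpos i j]
  refine step1.trans (le_of_eq ?_)
  simp only [Finset.sum_add_distrib]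
  have e1 : ∑ i, ∑ j, lam i ^ 2 / 2 * M i j = ∑ i : Fin m, lam i ^ 2 / 2 := by
    refine Finset.sum_congr rfl fun i _ => ?_
    rw [← Finset.mul_sum, hrow i, mul_one]
  have e2 : ∑ i, ∑ j, lam j ^ 2 / 2 * M i j = ∑ j : Fin m, lam j ^ 2 / 2 := by
    rw [Finset.sum_comm]
    refine Finset.sum_congr rfl fun j _ => ?_
    rw [← Finset.mul_sum, hcol j, mul_one]
  rw [e1, e2, ← Finset.sum_add_distrib]
  exact Finset.sum_congr rfl fun i _ => by ring

variable {n : ℕ} in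
lemma herm_contraction (T : Matrix (Fin n) (Fin n) ℂ →ₗ[ℂ] Matrix (Fin n) (Fin n) ℂ)
    (hTpos : IsPositiveMatrixMap T) (hTtr : IsTracePreservingMap T) (hTunital : T 1 = 1)
    {H : Matrix (Fin n) (Fin n) ℂ} (hH : H.IsHermitian) :
    ((T H) * (T H)).trace.re ≤ (H * H).trace.re := by
  set lam := hH.eigenvalues with hlam
  set P : Fin n → Matrix (Fin n) (Fin n) ℂ := fun i => T (specProj hH i) with hP
  have hPpsd : ∀ i, (P i).PosSemidef := fun i => hTpos _ (specProj_posSemidef hH i)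
  have hPsum : ∑ i, P i = 1 := by
    rw [hP, ← map_sum, specProj_sum, hTunital]
  have hPtr : ∀ i, (P i).trace = 1 := fun i => by
    rw [hP, hTtr]; exact specProj_trace hH i
  set M : Fin n → Fin n → ℝ := fun i j => ((P i * P j).trace).re with hM
  have hMpos : ∀ i j, 0 ≤ M i j := by
    intro i j
    have h := psd_trace_mul_nonneg (hPpsd i) (hPpsd j)
    simpa [hM] using (Complex.le_def.mp h).1
  have hrowC : ∀ i, ∑ j, (P i * P j).trace = 1 := by
    intro i
    rw [← Matrix.trace_sum, ← Finset.mul_sum, hPsum, mul_one]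
    exact hPtr i
  have hrow : ∀ i, ∑ j, M i j = 1 := by
    intro i
    have := congrArg Complex.re (hrowC i)
    simpa [hM, Complex.re_sum] using this
  have hcol : ∀ j, ∑ i, M i j = 1 := by
    intro j
    have h2 : ∑ i, (P i * P j).trace = 1 := by
      have : ∀ i, (P i * P j).trace = (P j * P i).trace := fun i => Matrix.trace_mul_comm _ _
      simp_rw [this]
      exact hrowC j
    have := congrArg Complex.re h2
    simpa [hM, Complex.re_sum] using this
  have hTH : T H = ∑ i, (lam i : ℂ) • P i := by
    conv_lhs => rw [specProj_decomp hH]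
    rw [map_sum]
    exact Finset.sum_congr rfl fun i _ => by rw [LinearMap.map_smul]
  have expand : (T H * T H).trace = ∑ i, ∑ j, ((lam i * lam j : ℝ) : ℂ) * (P i * P j).trace := by
    rw [hTH, Finset.sum_mul_sum]
    rw [Matrix.trace_sum]
    refine Finset.sum_congr rfl fun i _ => ?_
    rw [Matrix.trace_sum]
    refine Finset.sum_congr rfl fun j _ => ?_
    rw [smul_mul_smul_comm, Matrix.trace_smul, smul_eq_mul]
    push_cast
    ring
  have lhs_eq : (T H * T H).trace.re = ∑ i, ∑ j, lam i * lam j * M i j := by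
    rw [expand, Complex.re_sum]
    refine Finset.sum_congr rfl fun i _ => ?_
    rw [Complex.re_sum]
    refine Finset.sum_congr rfl fun j _ => ?_
    rw [Complex.re_ofReal_mul]
  have rhs_eq : (H * H).trace.re = ∑ i, lam i ^ 2 := by
    rw [trace_sq_eq_sum_sq hH, Complex.ofReal_re]
  rw [lhs_eq, rhs_eq]
  exact ds_ineq lam M hMpos hrow hcol

variable {n : ℕ}

lemma map_isHermitian (T : Matrix (Fin n) (Fin n) ℂ →ₗ[ℂ] Matrix (Fin n) (Fin n) ℂ)
    (hTpos : IsPositiveMatrixMap T) {H : Matrix (Fin n) (Fin n) ℂ} (hH : H.IsHermitian) :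
    (T H).IsHermitian := by
  have hTH : T H = ∑ i, (hH.eigenvalues i : ℂ) • T (specProj hH i) := by
    conv_lhs => rw [specProj_decomp hH]
    rw [map_sum]
    exact Finset.sum_congr rfl fun i _ => by rw [LinearMap.map_smul]
  rw [hTH]
  show (∑ i, (hH.eigenvalues i : ℂ) • T (specProj hH i))ᴴ = _
  rw [Matrix.conjTranspose_sum]
  refine Finset.sum_congr rfl fun i _ => ?_
  rw [Matrix.conjTranspose_smul, (hTpos _ (specProj_posSemidef hH i)).isHermitian.eq,
    Complex.star_def, Complex.conj_ofReal]

lemma cross_trace {P Q : Matrix (Fin n) (Fin n) ℂ} (hP : P.IsHermitian) (hQ : Q.IsHermitian) :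
    ((P + Complex.I • Q)ᴴ * (P + Complex.I • Q)).trace = (P * P).trace + (Q * Q).trace := by
  have hX : (P + Complex.I • Q)ᴴ = P - Complex.I • Q := by
    rw [Matrix.conjTranspose_add, Matrix.conjTranspose_smul, hP.eq, hQ.eq, Complex.star_def,
      Complex.conj_I, neg_smul, sub_eq_add_neg]
  rw [hX]
  simp only [sub_mul, mul_add, Matrix.smul_mul, Matrix.mul_smul, Matrix.trace_sub,
    Matrix.trace_add, Matrix.trace_smul, smul_smul, smul_eq_mul]
  linear_combination Complex.I * Matrix.trace_mul_comm P Q -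
    (Q * Q).trace * Complex.I_mul_I

lemma contraction (T : Matrix (Fin n) (Fin n) ℂ →ₗ[ℂ] Matrix (Fin n) (Fin n) ℂ)
    (hTpos : IsPositiveMatrixMap T) (hTtr : IsTracePreservingMap T) (hTunital : T 1 = 1)
    (A : Matrix (Fin n) (Fin n) ℂ) :
    ((T A)ᴴ * (T A)).trace.re ≤ (Aᴴ * A).trace.re := by
  set P : Matrix (Fin n) (Fin n) ℂ := A + Aᴴ with hPdef
  set Q : Matrix (Fin n) (Fin n) ℂ := Complex.I • (Aᴴ - A) with hQdef
  have hP : P.IsHermitian := by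
    rw [Matrix.IsHermitian, hPdef, Matrix.conjTranspose_add, Matrix.conjTranspose_conjTranspose,
      add_comm]
  have hQ : Q.IsHermitian := by
    rw [Matrix.IsHermitian, hQdef, Matrix.conjTranspose_smul, Matrix.conjTranspose_sub,
      Matrix.conjTranspose_conjTranspose, Complex.star_def, Complex.conj_I, neg_smul,
      ← smul_neg, neg_sub]
  have hsum : P + Complex.I • Q = (2 : ℂ) • A := by
    rw [hPdef, hQdef, smul_smul, Complex.I_mul_I, neg_one_smul, two_smul]
    abel
  have hTsum : T P + Complex.I • T Q = (2 : ℂ) • T A := by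
    rw [← LinearMap.map_smul, ← LinearMap.map_smul, ← map_add, hsum]
  have sc : ∀ X : Matrix (Fin n) (Fin n) ℂ,
      (((2:ℂ) • X)ᴴ * ((2:ℂ) • X)).trace = ((4:ℝ) : ℂ) * (Xᴴ * X).trace := by
    intro X
    rw [Matrix.conjTranspose_smul, Matrix.smul_mul, Matrix.mul_smul, smul_smul,
      Matrix.trace_smul, smul_eq_mul]
    norm_num
  have hA : ((4:ℝ) : ℂ) * (Aᴴ * A).trace = (P * P).trace + (Q * Q).trace := by
    rw [← sc A, ← hsum, cross_trace hP hQ]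
  have hTA : ((4:ℝ) : ℂ) * ((T A)ᴴ * (T A)).trace =
      (T P * T P).trace + (T Q * T Q).trace := by
    rw [← sc (T A), ← hTsum, cross_trace (map_isHermitian T hTpos hP) (map_isHermitian T hTpos hQ)]
  have h1 := herm_contraction T hTpos hTtr hTunital hP
  have h2 := herm_contraction T hTpos hTtr hTunital hQ
  have e1 := congrArg Complex.re hA
  have e2 := congrArg Complex.re hTA
  rw [Complex.add_re, Complex.re_ofReal_mul] at e1 e2
  linarith

lemma trace_eq_sum_eig {B : Matrix (Fin n) (Fin n) ℂ} (hB : B.IsHermitian) :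
    B.trace = ((∑ i, hB.eigenvalues i : ℝ) : ℂ) := by
  have h1 : star (hB.eigenvectorUnitary : Matrix (Fin n) (Fin n) ℂ) *
      (hB.eigenvectorUnitary : Matrix (Fin n) (Fin n) ℂ) = 1 :=
    Matrix.mem_unitaryGroup_iff'.mp hB.eigenvectorUnitary.2
  conv_lhs => rw [hB.spectral_theorem, Unitary.conjStarAlgAut_apply]
  rw [Matrix.trace_mul_cycle, h1, Matrix.one_mul, Matrix.trace_diagonal]
  push_cast
  rfl

lemma schatten_two_eq (X : Matrix (Fin n) (Fin n) ℂ) :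
    schattenNorm 2 X = ((Xᴴ * X).trace.re) ^ (1/2 : ℝ) := by
  rw [schattenNorm, if_neg (by norm_num : (2:ℝ≥0∞) ≠ ⊤)]
  have ht : (2:ℝ≥0∞).toReal = 2 := by simp
  rw [ht]
  congr 1
  rw [trace_eq_sum_eig (Matrix.posSemidef_conjTranspose_mul_self X).isHermitian,
    Complex.ofReal_re]
  refine Finset.sum_congr rfl fun i _ => ?_
  rw [singularValues, Real.rpow_two,
    Real.sq_sqrt (Matrix.eigenvalues_conjTranspose_mul_self_nonneg X i)]

/-- Let `T : M_n(ℂ) → M_n(ℂ)` be positive, trace preserving and unital, and let `S = T*` be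
its adjoint for the Hilbert–Schmidt inner product `⟨A, B⟩ = tr(A* B)`.  Then `T* ∘ T` has
operator norm exactly `1`: `𝟙` is an eigenvector with eigenvalue `1`, every eigenvalue is
at most `1`, and consequently `‖T(A)‖₂ ≤ ‖A‖₂` for all `A`. -/
theorem adjoint_comp_self_norm_one
    (n : ℕ) (T S : Matrix (Fin n) (Fin n) ℂ →ₗ[ℂ] Matrix (Fin n) (Fin n) ℂ)
    (hTpos : IsPositiveMatrixMap T) (hTtr : IsTracePreservingMap T) (hTunital : T 1 = 1)
    (hadj : ∀ A B : Matrix (Fin n) (Fin n) ℂ,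
      ((T A)ᴴ * B).trace = (Aᴴ * S B).trace) :
    S (T 1) = 1 ∧
      (∀ (c : ℝ) (G : Matrix (Fin n) (Fin n) ℂ), G ≠ 0 → S (T G) = (c : ℂ) • G → c ≤ 1) ∧
      ∀ A : Matrix (Fin n) (Fin n) ℂ, schattenNorm 2 (T A) ≤ schattenNorm 2 A := by
  refine ⟨?_, ?_, ?_⟩
  · -- S (T 1) = 1
    rw [hTunital]
    have key : ∀ A : Matrix (Fin n) (Fin n) ℂ, (Aᴴ * (S 1 - 1)).trace = 0 := by
      intro A
      have h := hadj A 1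
      rw [mul_one, Matrix.trace_conjTranspose, hTtr A, ← Matrix.trace_conjTranspose] at h
      rw [mul_sub, Matrix.trace_sub, ← h, mul_one, sub_self]
    have h0 := key (S 1 - 1)
    by_contra hne
    have hne' : S 1 - 1 ≠ 0 := sub_ne_zero_of_ne hne
    have := trace_ctm_pos hne'
    rw [h0] at this
    simp at this
  · -- eigenvalue bound
    intro c G hG heig
    have h := hadj G (T G)
    rw [heig, Matrix.mul_smul, Matrix.trace_smul, smul_eq_mul] at h
    have hle := contraction T hTpos hTtr hTunital G
    have hre := congrArg Complex.re h
    rw [Complex.re_ofReal_mul] at hre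
    have ht : 0 < ((Gᴴ * G).trace).re := trace_ctm_pos hG
    rw [hre] at hle
    nlinarith
  · -- Schatten-2 contraction
    intro A
    rw [schatten_two_eq, schatten_two_eq]
    apply Real.rpow_le_rpow ?_ (contraction T hTpos hTtr hTunital A) (by norm_num)
    have := psd_trace_nonneg (Matrix.posSemidef_conjTranspose_mul_self (T A))
    exact (Complex.le_def.mp this).1
end

section
/- Let n be even, 1 ≤ p ≤ ∞, and let T : M_n(ℂ) → M_n(ℂ) be a positive trace preserving linear map. Then for every Hermitian A ∈ M_n(ℂ) with tr A = 0, ‖T(A)‖_p ≤ (n/2)^{1-1/p} ‖A‖_p. -/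
open scoped ENNReal ComplexOrder

section aux

open Matrix Polynomial


variable {m : Type*} [Fintype m] [DecidableEq m]

lemma aux_charpoly_diagonal (d : m → ℂ) :
    (Matrix.diagonal d).charpoly = ∏ i, (X - C (d i)) := by
  have h : charmatrix (Matrix.diagonal d) = Matrix.diagonal (fun i => X - C (d i)) := by
    ext i j
    rcases eq_or_ne i j with rfl | hij
    · simp [charmatrix_apply_eq]
    · simp [charmatrix_apply_ne _ _ _ hij, Matrix.diagonal_apply_ne _ hij]
  rw [Matrix.charpoly, h, Matrix.det_diagonal]

lemma aux_charpoly_unitary_conj (U : Matrix.unitaryGroup m ℂ) (D : Matrix m m ℂ) :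
    ((U : Matrix m m ℂ) * D * star (U : Matrix m m ℂ)).charpoly = D.charpoly := by
  have hU : (U : Matrix m m ℂ) * star (U : Matrix m m ℂ) = 1 :=
    (Matrix.mem_unitaryGroup_iff).mp U.2
  set P := (C : ℂ →+* ℂ[X]).mapMatrix (U : Matrix m m ℂ) with hP
  set R := (C : ℂ →+* ℂ[X]).mapMatrix (star (U : Matrix m m ℂ)) with hR
  have hPR : P * R = 1 := by
    rw [hP, hR, ← _root_.map_mul, hU, _root_.map_one]
  have hcomm : P * Matrix.scalar m (X : ℂ[X]) = Matrix.scalar m (X : ℂ[X]) * P := by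
    rw [Matrix.scalar_commute (X : ℂ[X]) (fun r => Commute.all _ _) P]
  have hchar : charmatrix ((U : Matrix m m ℂ) * D * star (U : Matrix m m ℂ))
      = P * charmatrix D * R := by
    unfold charmatrix
    rw [_root_.map_mul, _root_.map_mul, Matrix.mul_sub, Matrix.sub_mul, hcomm,
      mul_assoc (Matrix.scalar m (X : ℂ[X])) P R, hPR, mul_one]
  rw [Matrix.charpoly, hchar, Matrix.det_mul, Matrix.det_mul, mul_comm (P.det),
    mul_assoc, ← Matrix.det_mul, hPR, Matrix.det_one, mul_one, Matrix.charpoly]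

lemma aux_roots_charpoly {M : Matrix m m ℂ} (hM : M.IsHermitian) :
    M.charpoly.roots = Multiset.map (fun i => (hM.eigenvalues i : ℂ)) Finset.univ.val := by
  have h1 : M.charpoly = ((Multiset.map (fun i => (hM.eigenvalues i : ℂ))
      Finset.univ.val).map (fun a => X - C a)).prod := by
    conv_lhs => rw [hM.spectral_theorem, Unitary.conjStarAlgAut_apply]
    rw [aux_charpoly_unitary_conj, aux_charpoly_diagonal]
    rw [Multiset.map_map, Finset.prod_eq_multiset_prod]
    rfl
  rw [h1, Polynomial.roots_multiset_prod_X_sub_C]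

/-- For a Hermitian matrix, the multiset of singular values is the multiset of
absolute values of eigenvalues. -/
lemma aux_sv_multiset {n : ℕ} {A : Matrix (Fin n) (Fin n) ℂ} (hA : A.IsHermitian) :
    Multiset.map (singularValues A) Finset.univ.val
      = Multiset.map (fun i => |hA.eigenvalues i|) Finset.univ.val := by
  unfold singularValues
  set hM := (Matrix.posSemidef_conjTranspose_mul_self A).isHermitian
  -- Aᴴ * A = U * diagonal (λ²) * Uᴴ
  have hAA : Aᴴ * A = (hA.eigenvectorUnitary : Matrix (Fin n) (Fin n) ℂ) *
      Matrix.diagonal (RCLike.ofReal ∘ (fun i => hA.eigenvalues i ^ 2)) *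
      star (hA.eigenvectorUnitary : Matrix (Fin n) (Fin n) ℂ) := by
    set U := (hA.eigenvectorUnitary : Matrix (Fin n) (Fin n) ℂ) with hUdef
    set D := Matrix.diagonal (RCLike.ofReal ∘ hA.eigenvalues : Fin n → ℂ) with hDdef
    have hsUU : star U * U = 1 := (Matrix.mem_unitaryGroup_iff').mp hA.eigenvectorUnitary.2
    have hDD : D * D = Matrix.diagonal (RCLike.ofReal ∘ (fun i => hA.eigenvalues i ^ 2)) := by
      have hfun : (fun i => ((hA.eigenvalues i : ℂ)) * (hA.eigenvalues i : ℂ))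
          = (RCLike.ofReal ∘ (fun i => hA.eigenvalues i ^ 2) : Fin n → ℂ) := by
        funext i
        simp [pow_two]
      rw [hDdef, Matrix.diagonal_mul_diagonal]
      exact congrArg Matrix.diagonal hfun
    calc Aᴴ * A = A * A := by rw [show Aᴴ = A from hA]
      _ = (U * D * star U) * (U * D * star U) := by
          conv_lhs => rw [hA.spectral_theorem, Unitary.conjStarAlgAut_apply]
      _ = U * D * (star U * U) * D * star U := by simp only [Matrix.mul_assoc]
      _ = U * D * D * star U := by rw [hsUU, Matrix.mul_one]
      _ = U * (D * D) * star U := by simp only [Matrix.mul_assoc]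
      _ = _ := by rw [hDD]
  have h2' : (Aᴴ * A).charpoly = ((Multiset.map (fun i => ((hA.eigenvalues i ^ 2 : ℝ) : ℂ))
      Finset.univ.val).map (fun a => X - C a)).prod := by
    rw [hAA, aux_charpoly_unitary_conj, aux_charpoly_diagonal, Finset.prod_eq_multiset_prod,
      Multiset.map_map]
    rfl
  have h2 : (Aᴴ * A).charpoly.roots = Multiset.map (fun i => ((hA.eigenvalues i ^ 2 : ℝ) : ℂ))
      Finset.univ.val := by
    rw [h2', Polynomial.roots_multiset_prod_X_sub_C]
  have h3 : Multiset.map (fun i => (hM.eigenvalues i : ℂ)) Finset.univ.val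
      = Multiset.map (fun i => ((hA.eigenvalues i ^ 2 : ℝ) : ℂ)) Finset.univ.val := by
    rw [← aux_roots_charpoly hM, h2]
  have h4 : Multiset.map (fun i => hM.eigenvalues i) Finset.univ.val
      = Multiset.map (fun i => hA.eigenvalues i ^ 2) Finset.univ.val := by
    apply Multiset.map_injective (f := (Complex.ofReal : ℝ → ℂ)) Complex.ofReal_injective
    rw [Multiset.map_map, Multiset.map_map]
    exact h3
  calc Multiset.map (fun i => Real.sqrt (hM.eigenvalues i)) Finset.univ.val
      = Multiset.map Real.sqrt (Multiset.map (fun i => hM.eigenvalues i) Finset.univ.val) := by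
        rw [Multiset.map_map]; rfl
    _ = Multiset.map Real.sqrt (Multiset.map (fun i => hA.eigenvalues i ^ 2) Finset.univ.val) := by
        rw [h4]
    _ = Multiset.map (fun i => |hA.eigenvalues i|) Finset.univ.val := by
        rw [Multiset.map_map]
        apply Multiset.map_congr rfl
        intro i _
        exact Real.sqrt_sq_eq_abs _



lemma aux_conj_psd (U : Matrix.unitaryGroup m ℂ) (d : m → ℝ) (hd : ∀ i, 0 ≤ d i) :
    ((U : Matrix m m ℂ) * Matrix.diagonal (RCLike.ofReal ∘ d) * star (U : Matrix m m ℂ)).PosSemidef := by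
  have hdiag : (Matrix.diagonal (RCLike.ofReal ∘ d) : Matrix m m ℂ).PosSemidef := by
    apply Matrix.PosSemidef.diagonal
    intro i
    simpa using Complex.zero_le_real.mpr (hd i)
  have := hdiag.mul_mul_conjTranspose_same (U : Matrix m m ℂ)
  rwa [← Matrix.star_eq_conjTranspose] at this

-- conjugation algebra helper
lemma aux_conj_mul (U : Matrix.unitaryGroup m ℂ) (D E : Matrix m m ℂ) :
    ((U : Matrix m m ℂ) * D * star (U : Matrix m m ℂ)) *
      ((U : Matrix m m ℂ) * E * star (U : Matrix m m ℂ))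
      = (U : Matrix m m ℂ) * (D * E) * star (U : Matrix m m ℂ) := by
  have hsUU : star (U : Matrix m m ℂ) * (U : Matrix m m ℂ) = 1 :=
    (Matrix.mem_unitaryGroup_iff').mp U.2
  calc ((U : Matrix m m ℂ) * D * star (U : Matrix m m ℂ)) *
      ((U : Matrix m m ℂ) * E * star (U : Matrix m m ℂ))
      = (U : Matrix m m ℂ) * D * (star (U : Matrix m m ℂ) * (U : Matrix m m ℂ)) * E *
        star (U : Matrix m m ℂ) := by simp only [Matrix.mul_assoc]
    _ = (U : Matrix m m ℂ) * D * E * star (U : Matrix m m ℂ) := by rw [hsUU, Matrix.mul_one]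
    _ = _ := by simp only [Matrix.mul_assoc]

lemma aux_trace_conj (U : Matrix.unitaryGroup m ℂ) (D : Matrix m m ℂ) :
    ((U : Matrix m m ℂ) * D * star (U : Matrix m m ℂ)).trace = D.trace := by
  rw [Matrix.trace_mul_cycle, (Matrix.mem_unitaryGroup_iff').mp U.2, Matrix.one_mul]

lemma aux_trace_eq_sum_eigenvalues {M : Matrix m m ℂ} (hM : M.IsHermitian) :
    M.trace = ((∑ i, hM.eigenvalues i : ℝ) : ℂ) := by
  conv_lhs => rw [hM.spectral_theorem, Unitary.conjStarAlgAut_apply]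
  rw [aux_trace_conj, Matrix.trace_diagonal]
  push_cast
  rfl

lemma aux_trace_psd_re_nonneg {P : Matrix m m ℂ} (hP : P.PosSemidef) : 0 ≤ P.trace.re := by
  rw [aux_trace_eq_sum_eigenvalues hP.isHermitian, Complex.ofReal_re]
  exact Finset.sum_nonneg fun i _ => hP.eigenvalues_nonneg i

lemma aux_trace_mul_psd_nonneg {P Q : Matrix m m ℂ} (hP : P.PosSemidef) (hQ : Q.PosSemidef) :
    0 ≤ ((P * Q).trace).re := by
  obtain ⟨X, hX, -, hXX⟩ := open MatrixOrder in
    CFC.exists_sqrt_of_isSelfAdjoint_of_quasispectrumRestricts hP.isHermitian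
      (QuasispectrumRestricts.nnreal_of_nonneg hP.nonneg)
  have h1 : P = X * X := by rw [hXX]
  have h2 : (P * Q).trace = (X * Q * X).trace := by
    conv_lhs => rw [h1, Matrix.trace_mul_cycle, Matrix.trace_mul_cycle]
  have h3 : (X * Q * X).PosSemidef := by
    have := hQ.mul_mul_conjTranspose_same X
    rwa [show Xᴴ = X from hX] at this
  rw [h2]
  exact aux_trace_psd_re_nonneg h3

lemma aux_weight_bound {B P Q : Matrix m m ℂ} (hB : B.IsHermitian)
    (hP : P.PosSemidef) (hQ : Q.PosSemidef) (hBPQ : B = P - Q)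
    (w : m → ℝ) (hw0 : ∀ i, 0 ≤ w i) (hw1 : ∀ i, w i ≤ 1) :
    -(Q.trace.re) ≤ ∑ i, w i * hB.eigenvalues i ∧
      ∑ i, w i * hB.eigenvalues i ≤ P.trace.re := by
  set U := hB.eigenvectorUnitary with hU
  set μ := hB.eigenvalues with hμ
  set Pr : Matrix m m ℂ :=
    (U : Matrix m m ℂ) * Matrix.diagonal (RCLike.ofReal ∘ w) * star (U : Matrix m m ℂ) with hPr
  have hPrPSD : Pr.PosSemidef := aux_conj_psd U w hw0
  have hPr1 : (1 : Matrix m m ℂ) - Pr =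
      (U : Matrix m m ℂ) * Matrix.diagonal (RCLike.ofReal ∘ (fun i => 1 - w i)) *
        star (U : Matrix m m ℂ) := by
    have h1 : (Matrix.diagonal (RCLike.ofReal ∘ (fun i => 1 - w i)) : Matrix m m ℂ)
        = 1 - Matrix.diagonal (RCLike.ofReal ∘ w) := by
      have h2 : (RCLike.ofReal ∘ (fun i => 1 - w i) : m → ℂ)
          = fun i => (1 : ℂ) - (RCLike.ofReal ∘ w) i := by
        funext i
        simp
      rw [h2, ← Matrix.diagonal_sub, Matrix.diagonal_one]
    rw [h1, Matrix.mul_sub, Matrix.mul_one, Matrix.sub_mul,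
      (Matrix.mem_unitaryGroup_iff).mp U.2]
  have h1PrPSD : ((1 : Matrix m m ℂ) - Pr).PosSemidef := by
    rw [hPr1]
    exact aux_conj_psd U _ (fun i => sub_nonneg.2 (hw1 i))
  have hPrB : (Pr * B).trace = ((∑ i, w i * μ i : ℝ) : ℂ) := by
    conv_lhs => rw [hPr, hB.spectral_theorem, Unitary.conjStarAlgAut_apply, aux_conj_mul, Matrix.diagonal_mul_diagonal]
    rw [aux_trace_conj, Matrix.trace_diagonal]
    push_cast
    rfl
  have hPB : (Pr * B).trace = (Pr * P).trace - (Pr * Q).trace := by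
    rw [hBPQ, Matrix.mul_sub, Matrix.trace_sub]
  have h2P : (Pr * P).trace.re + (((1 : Matrix m m ℂ) - Pr) * P).trace.re = P.trace.re := by
    rw [← Complex.add_re, ← Matrix.trace_add, ← Matrix.add_mul]
    norm_num
  have h2Q : (Pr * Q).trace.re + (((1 : Matrix m m ℂ) - Pr) * Q).trace.re = Q.trace.re := by
    rw [← Complex.add_re, ← Matrix.trace_add, ← Matrix.add_mul]
    norm_num
  have e1 : (∑ i, w i * μ i) = (Pr * P).trace.re - (Pr * Q).trace.re := by
    have := congrArg Complex.re hPB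
    rw [hPrB, Complex.ofReal_re, Complex.sub_re] at this
    exact this
  have n1 : 0 ≤ (Pr * P).trace.re := aux_trace_mul_psd_nonneg hPrPSD hP
  have n2 : 0 ≤ (Pr * Q).trace.re := aux_trace_mul_psd_nonneg hPrPSD hQ
  have n3 : 0 ≤ (((1 : Matrix m m ℂ) - Pr) * P).trace.re := aux_trace_mul_psd_nonneg h1PrPSD hP
  have n4 : 0 ≤ (((1 : Matrix m m ℂ) - Pr) * Q).trace.re := aux_trace_mul_psd_nonneg h1PrPSD hQ
  constructor <;> [linarith; linarith]

lemma aux_pos_part {A : Matrix m m ℂ} (hA : A.IsHermitian) :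
    ∃ Ap An : Matrix m m ℂ, Ap.PosSemidef ∧ An.PosSemidef ∧ A = Ap - An ∧
      Ap.trace = ((∑ i, max (hA.eigenvalues i) 0 : ℝ) : ℂ) ∧
      An.trace = ((∑ i, max (-hA.eigenvalues i) 0 : ℝ) : ℂ) := by
  set U := hA.eigenvectorUnitary with hU
  set lam := hA.eigenvalues with hlam
  refine ⟨(U : Matrix m m ℂ) * Matrix.diagonal (RCLike.ofReal ∘ (fun i => max (lam i) 0)) *
      star (U : Matrix m m ℂ),
    (U : Matrix m m ℂ) * Matrix.diagonal (RCLike.ofReal ∘ (fun i => max (-lam i) 0)) *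
      star (U : Matrix m m ℂ), ?_, ?_, ?_, ?_, ?_⟩
  · exact aux_conj_psd U _ (fun i => le_max_right _ _)
  · exact aux_conj_psd U _ (fun i => le_max_right _ _)
  · have hfun : (fun i => (RCLike.ofReal ∘ fun i => max (lam i) 0) i
          - ((RCLike.ofReal ∘ fun i => max (-lam i) 0) i : ℂ))
        = (RCLike.ofReal ∘ lam : m → ℂ) := by
      funext i
      simp only [Function.comp_apply]
      rw [← RCLike.ofReal_sub]
      congr 1
      rcases le_or_gt 0 (lam i) with h | h
      · rw [max_eq_left h, max_eq_right (by linarith), sub_zero]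
      · rw [max_eq_right (le_of_lt h), max_eq_left (by linarith), zero_sub, neg_neg]
    rw [← Matrix.sub_mul, ← Matrix.mul_sub, Matrix.diagonal_sub, hfun]
    exact hA.spectral_theorem
  · rw [aux_trace_conj, Matrix.trace_diagonal]
    push_cast
    rfl
  · rw [aux_trace_conj, Matrix.trace_diagonal]
    push_cast
    rfl

lemma aux_max_sub_max (x : ℝ) : max x 0 - max (-x) 0 = x := by
  rcases le_or_gt 0 x with h | h
  · rw [max_eq_left h, max_eq_right (by linarith), sub_zero]
  · rw [max_eq_right (le_of_lt h), max_eq_left (by linarith), zero_sub, neg_neg]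

lemma aux_max_add_max (x : ℝ) : max x 0 + max (-x) 0 = |x| := by
  rcases le_or_gt 0 x with h | h
  · rw [max_eq_left h, max_eq_right (by linarith), add_zero, abs_of_nonneg h]
  · rw [max_eq_right (le_of_lt h), max_eq_left (by linarith), zero_add, abs_of_neg h]

variable {n : ℕ} {A : Matrix (Fin n) (Fin n) ℂ}


lemma aux_sum_sv (hA : A.IsHermitian) (f : ℝ → ℝ) :
    ∑ i, f (singularValues A i) = ∑ i, f |hA.eigenvalues i| := by
  have h1 : ∑ i, f (singularValues A i)
      = (Multiset.map f (Multiset.map (singularValues A) Finset.univ.val)).sum := by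
    rw [Multiset.map_map]
    rfl
  have h2 : ∑ i, f |hA.eigenvalues i|
      = (Multiset.map f (Multiset.map (fun i => |hA.eigenvalues i|) Finset.univ.val)).sum := by
    rw [Multiset.map_map]
    rfl
  rw [h1, h2, aux_sv_multiset hA]

lemma aux_sv_mem (hA : A.IsHermitian) (i : Fin n) :
    ∃ j, singularValues A i = |hA.eigenvalues j| := by
  have h : singularValues A i ∈ Multiset.map (fun j => |hA.eigenvalues j|) Finset.univ.val := by
    rw [← aux_sv_multiset hA]
    exact Multiset.mem_map_of_mem _ (Finset.mem_univ_val i)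
  obtain ⟨j, _, hj⟩ := Multiset.mem_map.mp h
  exact ⟨j, hj.symm⟩

lemma aux_abs_mem (hA : A.IsHermitian) (j : Fin n) :
    ∃ i, |hA.eigenvalues j| = singularValues A i := by
  have h : |hA.eigenvalues j| ∈ Multiset.map (singularValues A) Finset.univ.val := by
    rw [aux_sv_multiset hA]
    exact Multiset.mem_map_of_mem _ (Finset.mem_univ_val j)
  obtain ⟨i, _, hi⟩ := Multiset.mem_map.mp h
  exact ⟨i, hi.symm⟩

lemma aux_holder (hn : 0 < n) (a : Fin n → ℝ) (ha : ∀ i, 0 ≤ a i) {q : ℝ} (hq : 1 ≤ q) :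
    ∑ i, a i ≤ (n : ℝ) ^ ((1 : ℝ) - 1/q) * (∑ i, a i ^ q) ^ (1/q) := by
  have hn' : (0 : ℝ) < n := by exact_mod_cast hn
  have key := Real.arith_mean_le_rpow_mean Finset.univ (fun _ => (n : ℝ)⁻¹) a
    (fun i _ => by positivity) (by simp [Finset.card_univ]; field_simp)
    (fun i _ => ha i) hq
  have hSq : (0 : ℝ) ≤ ∑ i, a i ^ q := Finset.sum_nonneg fun i _ => Real.rpow_nonneg (ha i) q
  rw [← Finset.mul_sum, ← Finset.mul_sum, Real.mul_rpow (by positivity) hSq] at key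
  -- key : n⁻¹ * ∑ a ≤ (n⁻¹)^(1/q) * (∑ a^q)^(1/q)
  have h2 : ∑ i, a i ≤ (n : ℝ) * ((n : ℝ)⁻¹ ^ (1/q) * (∑ i, a i ^ q) ^ (1/q)) := by
    rw [← mul_le_mul_iff_right₀ hn'] at key
    calc ∑ i, a i = (n : ℝ) * ((n:ℝ)⁻¹ * ∑ i, a i) := by field_simp
      _ ≤ _ := key
  calc ∑ i, a i ≤ (n : ℝ) * ((n : ℝ)⁻¹ ^ (1/q) * (∑ i, a i ^ q) ^ (1/q)) := h2
    _ = ((n:ℝ) * (n : ℝ)⁻¹ ^ (1/q)) * (∑ i, a i ^ q) ^ (1/q) := by ring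
    _ = (n : ℝ) ^ ((1:ℝ) - 1/q) * (∑ i, a i ^ q) ^ (1/q) := by
        congr 1
        rw [Real.inv_rpow (le_of_lt hn'), ← Real.rpow_neg_one ((n:ℝ) ^ (1/q)),
          ← Real.rpow_mul (le_of_lt hn')]
        nth_rewrite 1 [← Real.rpow_one (n:ℝ)]
        rw [← Real.rpow_add hn']
        norm_num
        rw [sub_eq_add_neg]

end aux

/-- **Theorem 4, even case.** Let `n` be even, `1 ≤ p ≤ ∞`, and `T : M_n(ℂ) → M_n(ℂ)` a
positive trace preserving map.  Then for every traceless Hermitian `A`,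
`‖T(A)‖_p ≤ (n/2)^{1-1/p} ‖A‖_p` (reading `1/p = 0` for `p = ∞`). -/
theorem schattenNorm_traceless_bound_even
    (n : ℕ) (hn : Even n) (p : ℝ≥0∞) (hp : 1 ≤ p)
    (T : Matrix (Fin n) (Fin n) ℂ →ₗ[ℂ] Matrix (Fin n) (Fin n) ℂ)
    (hTpos : IsPositiveMatrixMap T) (hTtr : IsTracePreservingMap T)
    (A : Matrix (Fin n) (Fin n) ℂ) (hA : A.IsHermitian) (hA0 : A.trace = 0) :
    schattenNorm p (T A) ≤ ((n : ℝ) / 2) ^ ((1 : ℝ) - 1 / p.toReal) * schattenNorm p A := by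
  classical
  set q := p.toReal with hqdef
  rcases Nat.eq_zero_or_pos n with hn0 | hnpos
  · subst hn0
    have hzero : ∀ M : Matrix (Fin 0) (Fin 0) ℂ, schattenNorm p M = 0 := by
      intro M
      unfold schattenNorm
      split
      · exact Real.iSup_of_isEmpty _
      · rename_i hptop
        have hq1 : 1 ≤ p.toReal := by
          rw [← ENNReal.toReal_one]
          exact ENNReal.toReal_mono hptop hp
        rw [Finset.univ_eq_empty, Finset.sum_empty, Real.zero_rpow]
        intro hc
        rw [div_eq_zero_iff] at hc
        rcases hc with hc | hc
        · exact one_ne_zero hc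
        · linarith
    rw [hzero, hzero]
    simp
  -- main case
  obtain ⟨Ap, An, hApPSD, hAnPSD, hAsub, hAptr, hAntr⟩ := aux_pos_part hA
  set lam := hA.eigenvalues with hlam
  set t := ∑ i, max (lam i) 0 with ht
  have ht0 : 0 ≤ t := Finset.sum_nonneg fun i _ => le_max_right _ _
  have hsumlam : ∑ i, lam i = 0 := by
    have h := aux_trace_eq_sum_eigenvalues hA
    rw [hA0] at h
    exact_mod_cast h.symm
  have htneg : ∑ i, max (-lam i) 0 = t := by
    have h : ∑ i, (max (lam i) 0 - max (-lam i) 0) = 0 := by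
      simp only [aux_max_sub_max]
      exact hsumlam
    rw [Finset.sum_sub_distrib] at h
    linarith
  have hsumabs : ∑ i, |lam i| = 2 * t := by
    calc ∑ i, |lam i| = ∑ i, (max (lam i) 0 + max (-lam i) 0) := by
          simp only [aux_max_add_max]
      _ = (∑ i, max (lam i) 0) + ∑ i, max (-lam i) 0 := Finset.sum_add_distrib
      _ = 2 * t := by rw [← ht, htneg]; ring
  set B := T A with hBdef
  have hBsub : B = T Ap - T An := by rw [hBdef, hAsub, map_sub]
  have hP : (T Ap).PosSemidef := hTpos Ap hApPSD
  have hQ : (T An).PosSemidef := hTpos An hAnPSD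
  have hB : B.IsHermitian := by rw [hBsub]; exact hP.isHermitian.sub hQ.isHermitian
  set μ := hB.eigenvalues with hμ
  have hPtr : (T Ap).trace.re = t := by rw [hTtr Ap, hAptr, Complex.ofReal_re]
  have hQtr : (T An).trace.re = t := by rw [hTtr An, hAntr, Complex.ofReal_re, htneg]
  -- positive part of the eigenvalues of B
  have hwpos := aux_weight_bound hB hP hQ hBsub (fun i => if 0 < μ i then 1 else 0)
    (fun i => by split <;> norm_num) (fun i => by split <;> norm_num)
  have hsum_pos_eq : ∑ i, (if 0 < μ i then (1:ℝ) else 0) * μ i = ∑ i, max (μ i) 0 := by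
    apply Finset.sum_congr rfl
    intro i _
    split <;> rename_i h
    · rw [one_mul, max_eq_left (le_of_lt h)]
    · rw [zero_mul, max_eq_right (not_lt.mp h)]
  have hTpos' : ∑ i, max (μ i) 0 ≤ t := by
    have h2 := hwpos.2
    rw [hsum_pos_eq, hPtr] at h2
    exact h2
  have hwneg := aux_weight_bound hB hP hQ hBsub (fun i => if μ i < 0 then 1 else 0)
    (fun i => by split <;> norm_num) (fun i => by split <;> norm_num)
  have hsum_neg_eq : ∑ i, (if μ i < 0 then (1:ℝ) else 0) * μ i = -∑ i, max (-μ i) 0 := by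
    rw [← Finset.sum_neg_distrib]
    apply Finset.sum_congr rfl
    intro i _
    split <;> rename_i h
    · rw [one_mul, max_eq_left (by linarith), neg_neg]
    · rw [zero_mul, max_eq_right (by simpa using not_lt.mp h), neg_zero]
  have hTneg' : ∑ i, max (-μ i) 0 ≤ t := by
    have h1 := hwneg.1
    rw [hsum_neg_eq, hQtr] at h1
    linarith
  have habs : ∀ i, |μ i| ≤ t := by
    intro i
    rw [abs_le]
    constructor
    · have h1 : -μ i ≤ max (-μ i) 0 := le_max_left _ _
      have h2 : max (-μ i) 0 ≤ ∑ j, max (-μ j) 0 :=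
        Finset.single_le_sum (f := fun j => max (-μ j) 0)
          (fun j _ => le_max_right _ _) (Finset.mem_univ i)
      linarith
    · have h1 : μ i ≤ max (μ i) 0 := le_max_left _ _
      have h2 : max (μ i) 0 ≤ ∑ j, max (μ j) 0 :=
        Finset.single_le_sum (f := fun j => max (μ j) 0)
          (fun j _ => le_max_right _ _) (Finset.mem_univ i)
      linarith
  have hsumabsB : ∑ i, |μ i| ≤ 2 * t := by
    have : ∑ i, |μ i| = (∑ i, max (μ i) 0) + ∑ i, max (-μ i) 0 := by
      rw [← Finset.sum_add_distrib]
      simp only [aux_max_add_max]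
    linarith
  by_cases hptop : p = ⊤
  · subst hptop
    rw [schattenNorm, if_pos rfl, schattenNorm, if_pos rfl]
    have hexp : ((1:ℝ) - 1 / (⊤ : ℝ≥0∞).toReal) = 1 := by simp
    rw [show q = (⊤ : ℝ≥0∞).toReal from hqdef, hexp, Real.rpow_one]
    have hne : Nonempty (Fin n) := ⟨⟨0, hnpos⟩⟩
    set SA := ⨆ i, singularValues A i with hSA
    have hSAj : ∀ j, |lam j| ≤ SA := by
      intro j
      obtain ⟨i, hi⟩ := aux_abs_mem hA j
      rw [hi]
      exact le_ciSup (Set.Finite.bddAbove (Set.finite_range _)) i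
    have h2t : 2 * t ≤ n * SA := by
      rw [← hsumabs]
      calc ∑ i, |lam i| ≤ ∑ _i : Fin n, SA := Finset.sum_le_sum fun i _ => hSAj i
        _ = n * SA := by rw [Finset.sum_const, Finset.card_univ, Fintype.card_fin,
              nsmul_eq_mul]
    apply ciSup_le
    intro i
    obtain ⟨j, hj⟩ := aux_sv_mem hB i
    rw [hj]
    calc |μ j| ≤ t := habs j
      _ ≤ (n : ℝ) / 2 * SA := by linarith
  · have hq1 : 1 ≤ q := by
      rw [hqdef, ← ENNReal.toReal_one]
      exact ENNReal.toReal_mono hptop hp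
    have hq0 : 0 < q := lt_of_lt_of_le one_pos hq1
    have hqne : q ≠ 0 := ne_of_gt hq0
    rw [schattenNorm, if_neg hptop, schattenNorm, if_neg hptop, ← hqdef]
    have hsA : ∑ i, singularValues A i ^ q = ∑ i, |lam i| ^ q :=
      aux_sum_sv hA (fun x => x ^ q)
    have hsB : ∑ i, singularValues B i ^ q = ∑ i, |μ i| ^ q :=
      aux_sum_sv hB (fun x => x ^ q)
    have hSBq0 : 0 ≤ ∑ i, singularValues B i ^ q :=
      Finset.sum_nonneg fun i _ => Real.rpow_nonneg (Real.sqrt_nonneg _) q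
    set SAq := ∑ i, |lam i| ^ q with hSAqdef
    have hSAq0 : 0 ≤ SAq :=
      Finset.sum_nonneg fun i _ => Real.rpow_nonneg (abs_nonneg _) q
    have hbound : ∑ i, |μ i| ^ q ≤ 2 * t ^ q := by
      have hterm : ∀ i, |μ i| ^ q ≤ t ^ (q - 1) * |μ i| := by
        intro i
        rcases eq_or_lt_of_le (abs_nonneg (μ i)) with h0 | h0
        · rw [← h0, Real.zero_rpow hqne, mul_zero]
        · have e0 : |μ i| ^ q = |μ i| ^ (q - 1) * |μ i| := by
            rw [show q = (q-1) + 1 from by ring, Real.rpow_add h0, Real.rpow_one]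
            ring_nf
          rw [e0]
          apply mul_le_mul_of_nonneg_right _ (abs_nonneg _)
          exact Real.rpow_le_rpow (abs_nonneg _) (habs i) (by linarith)
      calc ∑ i, |μ i| ^ q ≤ ∑ i, t ^ (q-1) * |μ i| := Finset.sum_le_sum fun i _ => hterm i
        _ = t ^ (q-1) * ∑ i, |μ i| := by rw [Finset.mul_sum]
        _ ≤ t ^ (q-1) * (2*t) := mul_le_mul_of_nonneg_left hsumabsB (Real.rpow_nonneg ht0 _)
        _ = 2 * (t ^ (q-1) * t) := by ring
        _ = 2 * t ^ q := by
            congr 1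
            rcases eq_or_lt_of_le ht0 with h0 | h0
            · rw [← h0, mul_zero, Real.zero_rpow hqne]
            · rw [show t ^ (q-1) * t = t ^ (q-1) * t ^ (1:ℝ) from by rw [Real.rpow_one],
                ← Real.rpow_add h0]
              norm_num
    have hLHS : (∑ i, singularValues B i ^ q) ^ ((1:ℝ)/q) ≤ (2:ℝ) ^ ((1:ℝ)/q) * t := by
      calc (∑ i, singularValues B i ^ q) ^ ((1:ℝ)/q)
          ≤ (2 * t ^ q) ^ ((1:ℝ)/q) := by
            apply Real.rpow_le_rpow hSBq0 _ (by positivity)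
            rw [hsB]
            exact hbound
        _ = (2:ℝ) ^ ((1:ℝ)/q) * (t ^ q) ^ ((1:ℝ)/q) := Real.mul_rpow (by norm_num)
            (Real.rpow_nonneg ht0 q)
        _ = (2:ℝ) ^ ((1:ℝ)/q) * t := by
            rw [← Real.rpow_mul ht0, mul_one_div, div_self hqne, Real.rpow_one]
    have hA2t : 2 * t ≤ (n:ℝ) ^ ((1:ℝ) - 1/q) * SAq ^ ((1:ℝ)/q) := by
      rw [← hsumabs]
      exact aux_holder hnpos (fun i => |lam i|) (fun i => abs_nonneg _) hq1
    have hc : (0:ℝ) < (2:ℝ) ^ ((1:ℝ) - 1/q) := Real.rpow_pos_of_pos two_pos _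
    have e2 : (2:ℝ) ^ ((1:ℝ)/q) = 2 / (2:ℝ) ^ ((1:ℝ) - 1/q) := by
      rw [eq_div_iff (ne_of_gt hc), ← Real.rpow_add two_pos]
      rw [show (1:ℝ)/q + (1 - 1/q) = 1 from by ring, Real.rpow_one]
    have e1 : ((n:ℝ)/2) ^ ((1:ℝ) - 1/q) = (n:ℝ) ^ ((1:ℝ) - 1/q) / (2:ℝ) ^ ((1:ℝ) - 1/q) :=
      Real.div_rpow (Nat.cast_nonneg n) (by norm_num) _
    have hfin : (2:ℝ) ^ ((1:ℝ)/q) * t ≤ ((n:ℝ)/2) ^ ((1:ℝ) - 1/q) * SAq ^ ((1:ℝ)/q) := by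
      calc (2:ℝ) ^ ((1:ℝ)/q) * t = (2 * t) / (2:ℝ) ^ ((1:ℝ) - 1/q) := by rw [e2]; ring
        _ ≤ ((n:ℝ) ^ ((1:ℝ) - 1/q) * SAq ^ ((1:ℝ)/q)) / (2:ℝ) ^ ((1:ℝ) - 1/q) :=
            (div_le_div_iff_of_pos_right hc).mpr hA2t
        _ = ((n:ℝ)/2) ^ ((1:ℝ) - 1/q) * SAq ^ ((1:ℝ)/q) := by rw [e1]; ring
    rw [hsA]
    exact le_trans hLHS hfin
end

section
/- Let P ∈ M_n(ℂ) be an orthogonal projection of rank d with 1 ≤ d < n, and define the (completely positive, trace preserving) linear map T : M_n(ℂ) → M_n(ℂ) by T(A) = |0⟩⟨0| tr(PA) + |1⟩⟨1| tr((𝟙−P)A), where |0⟩⟨0| and |1⟩⟨1| are two fixed orthogonal rank-one projections. Then for the traceless Hermitian matrix A = P − (d/(n−d))(𝟙−P) and 1 ≤ p < ∞ one has ‖T(A)‖_p / ‖A‖_p = (2 d^p / (d + d^p (n−d)^{1-p}))^{1/p}. -/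
open scoped ENNReal ComplexOrder

lemma my_trace_eq_sum_eigenvalues {n : ℕ} {M : Matrix (Fin n) (Fin n) ℂ}
    (hM : M.IsHermitian) : M.trace = ∑ i, (hM.eigenvalues i : ℂ) := by
  conv_lhs => rw [hM.spectral_theorem]
  rw [Unitary.conjStarAlgAut_apply, Matrix.trace_mul_cycle,
    (Matrix.mem_unitaryGroup_iff').mp (Matrix.IsHermitian.eigenvectorUnitary hM).2, one_mul,
    Matrix.trace_diagonal]
  simp

lemma my_eig_dichotomy {n : ℕ} {M : Matrix (Fin n) (Fin n) ℂ} (hM : M.IsHermitian)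
    (a b : ℝ) (h : (M - (a:ℂ) • 1) * (M - (b:ℂ) • 1) = 0) (i : Fin n) :
    hM.eigenvalues i = a ∨ hM.eigenvalues i = b := by
  set v := ⇑(hM.eigenvectorBasis i) with hv
  have hv0 : v ≠ 0 := by
    intro h0
    exact hM.eigenvectorBasis.orthonormal.ne_zero i (by ext j; exact congrFun h0 j)
  have hmv : M.mulVec v = ((hM.eigenvalues i : ℝ) : ℂ) • v := by
    have h' := hM.mulVec_eigenvectorBasis i
    rw [RCLike.real_smul_eq_coe_smul (K := ℂ)] at h'
    exact h'
  set lam : ℝ := hM.eigenvalues i with hlam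
  have h1 : (M - (b:ℂ) • 1).mulVec v = ((lam:ℂ) - b) • v := by
    rw [Matrix.sub_mulVec, Matrix.smul_mulVec, Matrix.one_mulVec, hmv, sub_smul]
  have h2 : ((M - (a:ℂ) • 1) * (M - (b:ℂ) • 1)).mulVec v
      = (((lam:ℂ) - a) * ((lam:ℂ) - b)) • v := by
    rw [← Matrix.mulVec_mulVec, h1, Matrix.mulVec_smul, Matrix.sub_mulVec,
      Matrix.smul_mulVec, Matrix.one_mulVec, hmv, ← sub_smul, smul_smul, mul_comm]
  rw [h, Matrix.zero_mulVec] at h2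
  have := (smul_eq_zero.mp h2.symm).resolve_right hv0
  rcases mul_eq_zero.mp this with h' | h'
  · left; exact_mod_cast sub_eq_zero.mp h'
  · right; exact_mod_cast sub_eq_zero.mp h'

lemma my_sum_two_values {n : ℕ} (lam : Fin n → ℝ) (a b : ℝ)
    (h : ∀ i, lam i = a ∨ lam i = b) (k : ℕ)
    (hsum : ∑ i, lam i = k * a + ((n : ℝ) - k) * b) (f : ℝ → ℝ) :
    ∑ i, f (lam i) = k * f a + ((n : ℝ) - k) * f b := by
  by_cases hab : a = b
  · subst hab
    have : ∀ i, lam i = a := fun i => (h i).elim id id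
    simp only [this]
    rw [Finset.sum_const, Finset.card_univ, Fintype.card_fin]
    ring
  · classical
    set S := Finset.univ.filter (fun i => lam i = a) with hS
    have hcompl : ∀ i ∈ Finset.univ.filter (fun i => ¬ lam i = a), lam i = b := by
      intro i hi
      simp only [Finset.mem_filter] at hi
      exact (h i).resolve_left hi.2
    have hsplit : ∀ g : ℝ → ℝ, ∑ i, g (lam i) = S.card * g a +
        ((n : ℝ) - S.card) * g b := by
      intro g
      rw [← Finset.sum_filter_add_sum_filter_not Finset.univ (fun i => lam i = a)]
      have e1 : ∑ i ∈ S, g (lam i) = S.card * g a := by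
        rw [Finset.sum_congr rfl (fun i hi => by
          rw [(Finset.mem_filter.mp hi).2]), Finset.sum_const, nsmul_eq_mul]
      have e2 : ∑ i ∈ Finset.univ.filter (fun i => ¬ lam i = a), g (lam i)
          = ((n : ℝ) - S.card) * g b := by
        rw [Finset.sum_congr rfl (fun i hi => by rw [hcompl i hi]), Finset.sum_const,
          nsmul_eq_mul]
        congr 1
        have hc1 := Finset.card_filter_add_card_filter_not
          (s := (Finset.univ : Finset (Fin n))) (p := fun i => lam i = a)
        rw [Finset.card_univ, Fintype.card_fin] at hc1
        have hc2 : (Finset.univ.filter (fun i => ¬ lam i = a)).card = n - S.card := by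
          rw [hS]; omega
        rw [hc2]
        have hle : S.card ≤ n := by
          have := Finset.card_filter_le Finset.univ (fun i => lam i = a)
          simpa [Finset.card_univ] using this
        push_cast [Nat.cast_sub hle]
        ring
      rw [e1, e2]
    have hcard : (S.card : ℝ) = k := by
      have h1 := hsplit id
      simp only [id] at h1
      rw [hsum] at h1
      have : ((S.card : ℝ) - k) * (a - b) = 0 := by ring_nf; linarith [h1]
      rcases mul_eq_zero.mp this with h' | h'
      · linarith [sub_eq_zero.mp h']
      · exact absurd (sub_eq_zero.mp h') hab
    rw [hsplit f, hcard]

lemma my_ct_std {n : ℕ} (i : Fin n) :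
    Matrix.conjTranspose (Matrix.single i i (1:ℂ)) = Matrix.single i i 1 := by
  ext a b
  simp [Matrix.conjTranspose_apply, Matrix.single, and_comm]

lemma my_trace_std {n : ℕ} (i : Fin n) :
    (Matrix.single i i (1:ℂ)).trace = 1 := by
  simp [Matrix.trace, Matrix.diag, Matrix.single, Matrix.of_apply]

/-- For the completely positive trace preserving map
`T(A) = |0⟩⟨0| tr(PA) + |1⟩⟨1| tr((𝟙−P)A)`, with `P` a rank-`d` orthogonal projection
(`1 ≤ d < n`), and the traceless Hermitian matrix `A = P − (d/(n−d))(𝟙−P)`, one has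
`‖T(A)‖_p / ‖A‖_p = (2 d^p / (d + d^p (n−d)^{1-p}))^{1/p}` for `1 ≤ p < ∞`. -/
theorem schattenNorm_ratio_projection_map
    (n d : ℕ) (hd1 : 1 ≤ d) (hdn : d < n)
    (P : Matrix (Fin n) (Fin n) ℂ) (hP : P.IsHermitian) (hproj : P * P = P)
    (htr : P.trace = (d : ℂ)) (p : ℝ) (hp : 1 ≤ p)
    (A : Matrix (Fin n) (Fin n) ℂ)
    (hA : A = P - ((d : ℂ) / ((n : ℂ) - (d : ℂ))) • (1 - P))
    (TA : Matrix (Fin n) (Fin n) ℂ)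
    (hTA : TA = (P * A).trace • Matrix.single (⟨0, by omega⟩ : Fin n) ⟨0, by omega⟩ 1
        + ((1 - P) * A).trace • Matrix.single (⟨1, by omega⟩ : Fin n) ⟨1, by omega⟩ 1) :
    schattenNorm (ENNReal.ofReal p) TA / schattenNorm (ENNReal.ofReal p) A
      = (2 * (d : ℝ) ^ p / ((d : ℝ) + (d : ℝ) ^ p * ((n : ℝ) - (d : ℝ)) ^ (1 - p))) ^ (1 / p) := by
  have hp0 : 0 < p := by linarith
  have hdR : (0:ℝ) < d := by exact_mod_cast hd1
  have hndR : (0:ℝ) < (n:ℝ) - d := by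
    have : (d:ℝ) < n := by exact_mod_cast hdn
    linarith
  set c : ℝ := (d:ℝ) / ((n:ℝ) - d) with hc
  have hc0 : 0 < c := div_pos hdR hndR
  have hndC : ((n:ℂ) - (d:ℂ)) ≠ 0 := by
    have : ((n:ℂ) - (d:ℂ)) = (((n:ℝ) - d : ℝ) : ℂ) := by push_cast; ring
    rw [this]
    exact_mod_cast hndR.ne'
  have hcC : ((c:ℂ)) = (d:ℂ) / ((n:ℂ) - (d:ℂ)) := by
    rw [hc]; push_cast; ring
  have hA' : A = P - (c:ℂ) • (1 - P) := by rw [hA, hcC]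
  -- projection algebra
  have hPQ : P * (1 - P) = 0 := by rw [Matrix.mul_sub, Matrix.mul_one, hproj, sub_self]
  have hQP : (1 - P) * P = 0 := by rw [Matrix.sub_mul, Matrix.one_mul, hproj, sub_self]
  have hQQ : (1 - P) * (1 - P) = (1 - P) := by
    rw [Matrix.mul_sub, Matrix.mul_one, hQP, sub_zero]
  have hAH : A.IsHermitian := by
    rw [hA']
    unfold Matrix.IsHermitian
    simp [Matrix.conjTranspose_sub, Matrix.conjTranspose_smul, hP.eq, Complex.star_def,
      Complex.conj_ofReal]
  have hAA : A * A = P + ((c:ℂ)^2) • (1 - P) := by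
    rw [hA']
    simp only [Matrix.sub_mul, Matrix.mul_sub, Matrix.smul_mul, Matrix.mul_smul, hproj,
      Matrix.mul_one, Matrix.one_mul]
    module
  -- A-side spectral analysis
  set hMA := (Matrix.posSemidef_conjTranspose_mul_self A).isHermitian with hhMA
  have hAHeq : Matrix.conjTranspose A = A := hAH
  have hMAeq : Matrix.conjTranspose A * A = P + ((c:ℂ)^2) • (1 - P) := by rw [hAHeq, hAA]
  have hpolyA : (Matrix.conjTranspose A * A - ((1:ℝ):ℂ) • 1)
      * (Matrix.conjTranspose A * A - ((c^2:ℝ):ℂ) • 1) = 0 := by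
    rw [hMAeq]
    have f1 : P + ((c:ℂ)^2) • (1 - P) - ((1:ℝ):ℂ) • 1 = ((c:ℂ)^2 - 1) • (1 - P) := by
      push_cast; module
    have f2 : P + ((c:ℂ)^2) • (1 - P) - ((c^2:ℝ):ℂ) • 1 = (1 - (c:ℂ)^2) • P := by
      push_cast; module
    rw [f1, f2, Matrix.smul_mul, Matrix.mul_smul, hQP, smul_zero, smul_zero]
  have hdichA : ∀ i, hMA.eigenvalues i = 1 ∨ hMA.eigenvalues i = c^2 :=
    my_eig_dichotomy hMA 1 (c^2) hpolyA
  have htrA : (Matrix.conjTranspose A * A).trace = (((d:ℝ) + ((n:ℝ)-d)*c^2 : ℝ) : ℂ) := by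
    rw [hMAeq, Matrix.trace_add, Matrix.trace_smul, Matrix.trace_sub, Matrix.trace_one, htr]
    push_cast
    simp [smul_eq_mul]
    ring
  have hsumA : ∑ i, hMA.eigenvalues i = (d:ℝ) * 1 + ((n:ℝ) - d) * c^2 := by
    have h1 := my_trace_eq_sum_eigenvalues hMA
    rw [htrA] at h1
    have h2 : (((d:ℝ) + ((n:ℝ)-d)*c^2 : ℝ) : ℂ) = ((∑ i, hMA.eigenvalues i : ℝ) : ℂ) := by
      rw [h1]; push_cast; ring
    have h3 := Complex.ofReal_injective h2
    rw [← h3]; ring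
  have sumA : ∑ i, Real.sqrt (hMA.eigenvalues i) ^ p
      = (d:ℝ) * (Real.sqrt 1 ^ p) + ((n:ℝ) - d) * (Real.sqrt (c^2) ^ p) :=
    my_sum_two_values _ 1 (c^2) hdichA d hsumA (fun x => Real.sqrt x ^ p)
  have sumA' : ∑ i, singularValues A i ^ p = (d:ℝ) + ((n:ℝ) - d) * c ^ p := by
    simp only [singularValues, ← hhMA]
    rw [sumA, Real.sqrt_one, Real.one_rpow, Real.sqrt_sq hc0.le, mul_one]
  -- TA-side
  have hPA : P * A = P := by
    rw [hA', Matrix.mul_sub, Matrix.mul_smul, hPQ, smul_zero, sub_zero, hproj]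
  have hQA : (1 - P) * A = (-(c:ℂ)) • (1 - P) := by
    rw [hA', Matrix.mul_sub, Matrix.mul_smul, hQP, hQQ, zero_sub, ← neg_smul]
  have htrPA : (P * A).trace = (d:ℂ) := by rw [hPA, htr]
  have htrQA : ((1 - P) * A).trace = -(d:ℂ) := by
    rw [hQA, Matrix.trace_smul, Matrix.trace_sub, Matrix.trace_one, Fintype.card_fin, htr]
    simp only [smul_eq_mul]
    rw [hcC]
    field_simp
  rw [htrPA, htrQA] at hTA
  have hne01 : (⟨0, by omega⟩ : Fin n) ≠ (⟨1, by omega⟩ : Fin n) := by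
    simp [Fin.ext_iff]
  have hTAH : Matrix.conjTranspose TA = TA := by
    rw [hTA]
    rw [Matrix.conjTranspose_add, Matrix.conjTranspose_smul, Matrix.conjTranspose_smul,
      my_ct_std, my_ct_std]
    simp
  have e00 : Matrix.single (⟨0, by omega⟩ : Fin n) (⟨0, by omega⟩ : Fin n) (1:ℂ)
      * Matrix.single (⟨0, by omega⟩ : Fin n) (⟨0, by omega⟩ : Fin n) (1:ℂ)
      = Matrix.single (⟨0, by omega⟩ : Fin n) (⟨0, by omega⟩ : Fin n) (1:ℂ) := by
    rw [Matrix.single_mul_single_same, mul_one]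
  have e11 : Matrix.single (⟨1, by omega⟩ : Fin n) (⟨1, by omega⟩ : Fin n) (1:ℂ)
      * Matrix.single (⟨1, by omega⟩ : Fin n) (⟨1, by omega⟩ : Fin n) (1:ℂ)
      = Matrix.single (⟨1, by omega⟩ : Fin n) (⟨1, by omega⟩ : Fin n) (1:ℂ) := by
    rw [Matrix.single_mul_single_same, mul_one]
  have e01 : Matrix.single (⟨0, by omega⟩ : Fin n) (⟨0, by omega⟩ : Fin n) (1:ℂ)
      * Matrix.single (⟨1, by omega⟩ : Fin n) (⟨1, by omega⟩ : Fin n) (1:ℂ) = 0 :=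
    Matrix.single_mul_single_of_ne _ _ _ _ hne01 _
  have e10 : Matrix.single (⟨1, by omega⟩ : Fin n) (⟨1, by omega⟩ : Fin n) (1:ℂ)
      * Matrix.single (⟨0, by omega⟩ : Fin n) (⟨0, by omega⟩ : Fin n) (1:ℂ) = 0 :=
    Matrix.single_mul_single_of_ne _ _ _ _ hne01.symm _
  have hMT : Matrix.conjTranspose TA * TA
      = ((d:ℂ)^2) • Matrix.single (⟨0, by omega⟩ : Fin n) (⟨0, by omega⟩ : Fin n) 1
      + ((d:ℂ)^2) • Matrix.single (⟨1, by omega⟩ : Fin n) (⟨1, by omega⟩ : Fin n) 1 := by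
    rw [hTAH, hTA]
    simp only [Matrix.add_mul, Matrix.mul_add, Matrix.smul_mul, Matrix.mul_smul,
      e00, e01, e10, e11, smul_zero, smul_smul,
      add_zero, zero_add, neg_mul, mul_neg, neg_neg, neg_smul]
    module
  set hMT' := (Matrix.posSemidef_conjTranspose_mul_self TA).isHermitian with hhMT
  have hpolyT : (Matrix.conjTranspose TA * TA - (((d:ℝ)^2:ℝ):ℂ) • 1)
      * (Matrix.conjTranspose TA * TA - ((0:ℝ):ℂ) • 1) = 0 := by
    rw [hMT]
    push_cast
    simp only [zero_smul, sub_zero]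
    simp only [Matrix.sub_mul, Matrix.add_mul, Matrix.mul_add, Matrix.smul_mul,
      Matrix.mul_smul, e00, e01, e10, e11, smul_zero, smul_smul,
      add_zero, zero_add, Matrix.one_mul]
    module
  have hdichT : ∀ i, hMT'.eigenvalues i = (d:ℝ)^2 ∨ hMT'.eigenvalues i = 0 :=
    my_eig_dichotomy hMT' ((d:ℝ)^2) 0 hpolyT
  have htrT : (Matrix.conjTranspose TA * TA).trace = ((2 * (d:ℝ)^2 : ℝ) : ℂ) := by
    rw [hMT, Matrix.trace_add, Matrix.trace_smul, Matrix.trace_smul, my_trace_std,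
      my_trace_std]
    push_cast
    simp [smul_eq_mul]
    ring
  have hsumT : ∑ i, hMT'.eigenvalues i = (2:ℕ) * ((d:ℝ)^2) + ((n:ℝ) - (2:ℕ)) * 0 := by
    have h1 := my_trace_eq_sum_eigenvalues hMT'
    rw [htrT] at h1
    have h2 : ((2 * (d:ℝ)^2 : ℝ) : ℂ) = ((∑ i, hMT'.eigenvalues i : ℝ) : ℂ) := by
      rw [h1]; push_cast; ring
    have h3 := Complex.ofReal_injective h2
    rw [← h3]; push_cast; ring
  have sumT : ∑ i, Real.sqrt (hMT'.eigenvalues i) ^ p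
      = (2:ℕ) * (Real.sqrt ((d:ℝ)^2) ^ p) + ((n:ℝ) - (2:ℕ)) * (Real.sqrt 0 ^ p) :=
    my_sum_two_values _ ((d:ℝ)^2) 0 hdichT 2 hsumT (fun x => Real.sqrt x ^ p)
  have sumT' : ∑ i, singularValues TA i ^ p = 2 * (d:ℝ) ^ p := by
    simp only [singularValues, ← hhMT]
    rw [sumT, Real.sqrt_sq hdR.le, Real.sqrt_zero, Real.zero_rpow hp0.ne', mul_zero,
      add_zero]
    norm_num
  -- put it together
  have hofp : ENNReal.ofReal p ≠ ⊤ := ENNReal.ofReal_ne_top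
  have htop : (ENNReal.ofReal p).toReal = p := ENNReal.toReal_ofReal hp0.le
  simp only [schattenNorm, if_neg hofp, htop, sumA', sumT']
  have hden : ((n:ℝ) - d) * c ^ p = (d:ℝ)^p * ((n:ℝ)-d)^(1-p) := by
    rw [hc, Real.div_rpow hdR.le hndR.le, Real.rpow_sub hndR, Real.rpow_one]
    have h1 : ((n:ℝ) - d) ^ p ≠ 0 := by positivity
    field_simp
  rw [hden]
  have hnum0 : (0:ℝ) ≤ 2 * (d:ℝ)^p := by positivity
  have hden0 : (0:ℝ) ≤ (d:ℝ) + (d:ℝ)^p * ((n:ℝ)-d)^(1-p) := by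
    have h1 : (0:ℝ) ≤ ((n:ℝ)-d)^(1-p) := Real.rpow_nonneg hndR.le _
    have h2 : (0:ℝ) ≤ (d:ℝ)^p := Real.rpow_nonneg hdR.le _
    nlinarith
  rw [← Real.div_rpow hnum0 hden0]
end

section
/- Let 1 ≤ p < ∞. For even n, taking d = n/2 in the map T(A) = |0⟩⟨0| tr(PA) + |1⟩⟨1| tr((𝟙−P)A) (P a rank-d projection) and A = P − (d/(n−d))(𝟙−P), one gets ‖T(A)‖_p = (n/2)^{1-1/p} ‖A‖_p; for odd n, taking d = (n+1)/2 one gets ‖T(A)‖_p = (2^{2-p}/((n-1)^{1-p}+(n+1)^{1-p}))^{1/p} ‖A‖_p. Hence the bounds of Theorem 4 on the traceless Hermitian hyperplane are attained by a completely positive trace preserving map. -/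
open scoped ENNReal ComplexOrder

open Matrix in
lemma eig_two_values {n : ℕ} {M : Matrix (Fin n) (Fin n) ℂ} (hM : M.IsHermitian)
    (a b : ℝ) (h : (M - (a : ℂ) • 1) * (M - (b : ℂ) • 1) = 0) (i : Fin n) :
    hM.eigenvalues i = a ∨ hM.eigenvalues i = b := by
  classical
  set U : Matrix (Fin n) (Fin n) ℂ := (hM.eigenvectorUnitary : Matrix (Fin n) (Fin n) ℂ) with hU
  have hUU : star U * U = 1 := (Matrix.mem_unitaryGroup_iff').mp hM.eigenvectorUnitary.2
  have hD : star U * M * U = diagonal (RCLike.ofReal ∘ hM.eigenvalues) := by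
    have := hM.conjStarAlgAut_star_eigenvectorUnitary
    rw [Unitary.conjStarAlgAut_apply] at this
    simpa [hU] using this
  have key : ∀ (t : ℂ), star U * (M - t • 1) * U
      = diagonal (RCLike.ofReal ∘ hM.eigenvalues) - t • 1 := by
    intro t
    rw [Matrix.mul_sub, Matrix.sub_mul, hD, Matrix.mul_smul, Matrix.smul_mul, Matrix.mul_one, hUU]
  have h2 : (diagonal (RCLike.ofReal ∘ hM.eigenvalues) - (a : ℂ) • (1 : Matrix (Fin n) (Fin n) ℂ))
      * (diagonal (RCLike.ofReal ∘ hM.eigenvalues) - (b : ℂ) • (1 : Matrix (Fin n) (Fin n) ℂ)) = 0 := by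
    rw [← key, ← key]
    have h5 : star U * (M - (a : ℂ) • 1) * U * (star U * (M - (b : ℂ) • 1) * U)
        = star U * ((M - (a : ℂ) • 1) * (M - (b : ℂ) • 1)) * U := by
      have hUU' : U * star U = 1 := (Matrix.mem_unitaryGroup_iff).mp hM.eigenvectorUnitary.2
      simp only [Matrix.mul_assoc]
      rw [← Matrix.mul_assoc U (star U), hUU', Matrix.one_mul]
    rw [h5, h, Matrix.mul_zero, Matrix.zero_mul]
  rw [Matrix.smul_one_eq_diagonal, Matrix.smul_one_eq_diagonal, Matrix.diagonal_sub,
    Matrix.diagonal_sub, Matrix.diagonal_mul_diagonal] at h2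
  have h3 := congrFun (congrFun h2 i) i
  simp only [Matrix.diagonal_apply_eq, Matrix.zero_apply, Pi.sub_apply, Function.comp_apply] at h3
  rcases mul_eq_zero.mp h3 with h4 | h4 <;> [left; right] <;>
    exact RCLike.ofReal_inj.mp (sub_eq_zero.mp h4)

open Matrix in
lemma sum_eig_trace {n : ℕ} {M : Matrix (Fin n) (Fin n) ℂ} (hM : M.IsHermitian) :
    (∑ i, (hM.eigenvalues i : ℂ)) = M.trace := by
  conv_rhs => rw [hM.spectral_theorem]
  rw [Unitary.conjStarAlgAut_apply, Matrix.trace_mul_cycle,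
    (Matrix.mem_unitaryGroup_iff').mp hM.eigenvectorUnitary.2, Matrix.one_mul,
    Matrix.trace_diagonal]
  rfl

open Matrix in
lemma sum_eig_real {n : ℕ} {M : Matrix (Fin n) (Fin n) ℂ} (hM : M.IsHermitian) (t : ℝ)
    (h : M.trace = (t : ℂ)) : ∑ i, hM.eigenvalues i = t := by
  have h1 := sum_eig_trace hM
  rw [h] at h1
  exact_mod_cast h1

lemma sum_interp {n : ℕ} (lam : Fin n → ℝ) (a b α β : ℝ)
    (hvals : ∀ i, lam i = a ∨ lam i = b) (f : ℝ → ℝ)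
    (ha : f a = α + β * a) (hb : f b = α + β * b) :
    ∑ i, f (lam i) = n * α + β * ∑ i, lam i := by
  have h1 : ∀ i, f (lam i) = α + β * lam i := fun i => by
    rcases hvals i with h | h <;> rw [h] <;> assumption
  rw [Finset.sum_congr rfl fun i _ => h1 i, Finset.sum_add_distrib, Finset.sum_const,
    ← Finset.mul_sum]
  simp [mul_comm]

open Matrix in
lemma stdH {n : ℕ} (i : Fin n) (c : ℂ) :
    (Matrix.single i i c)ᴴ = Matrix.single i i (star c) := by
  ext a b
  simp only [Matrix.conjTranspose_apply, Matrix.single, Matrix.of_apply,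
    apply_ite (star : ℂ → ℂ), star_zero, and_comm]

open Matrix in
lemma sumA_eq {n d m : ℕ} (hnd : n = d + m) (hd1 : 1 ≤ d) (hm1 : 1 ≤ m) (p : ℝ) (hp : 1 ≤ p)
    (P A : Matrix (Fin n) (Fin n) ℂ) (hP : P.IsHermitian) (hproj : P * P = P)
    (htr : P.trace = (d : ℂ))
    (hA : A = P - ((d : ℂ) / ((n : ℂ) - (d : ℂ))) • (1 - P))
    (c : ℝ) (hc : c = (d : ℝ) / m) :
    ∑ i, singularValues A i ^ p = d + m * c ^ p := by
  have hm0 : (m : ℝ) ≠ 0 := by positivity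
  have hc0 : 0 < c := by rw [hc]; positivity
  have hz : ((d : ℂ) / ((n : ℂ) - (d : ℂ))) = (c : ℂ) := by
    have hnm : (n : ℂ) - (d : ℂ) = (m : ℂ) := by rw [hnd]; push_cast; ring
    rw [hnm, hc]; push_cast; ring
  rw [hz] at hA
  have hPQ : P * (1 - P) = 0 := by rw [mul_sub, mul_one, hproj, sub_self]
  have hQP : (1 - P) * P = 0 := by rw [sub_mul, one_mul, hproj, sub_self]
  have hQQ : (1 - P) * (1 - P) = 1 - P := by rw [sub_mul, one_mul, mul_sub, mul_one, hproj]; abel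
  have hAH : Aᴴ = A := by
    rw [hA]
    simp [Matrix.conjTranspose_sub, Matrix.conjTranspose_smul, hP.eq, Complex.conj_ofReal]
  have hB : Aᴴ * A = P + ((c : ℂ) ^ 2) • (1 - P) := by
    rw [hAH, hA]
    have expand : (P - (c : ℂ) • (1 - P)) * (P - (c : ℂ) • (1 - P))
        = P * P - (c : ℂ) • (P * (1 - P)) - (c : ℂ) • ((1 - P) * P)
          + ((c : ℂ) ^ 2) • ((1 - P) * (1 - P)) := by
      simp only [Matrix.sub_mul, Matrix.mul_sub, Matrix.smul_mul, Matrix.mul_smul, smul_smul,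
        pow_two]
      module
    rw [expand, hproj, hPQ, hQP, hQQ, smul_zero, sub_zero, sub_zero]
  have hBH : (Aᴴ * A).IsHermitian := (Matrix.posSemidef_conjTranspose_mul_self A).isHermitian
  have hpoly : (Aᴴ * A - ((1 : ℝ) : ℂ) • 1) * (Aᴴ * A - ((c ^ 2 : ℝ) : ℂ) • 1) = 0 := by
    rw [hB]
    have e1 : P + ((c : ℂ) ^ 2) • (1 - P) - ((1 : ℝ) : ℂ) • (1 : Matrix (Fin n) (Fin n) ℂ)
        = ((c : ℂ) ^ 2 - 1) • (1 - P) := by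
      push_cast; module
    have e2 : P + ((c : ℂ) ^ 2) • (1 - P) - ((c ^ 2 : ℝ) : ℂ) • (1 : Matrix (Fin n) (Fin n) ℂ)
        = (1 - (c : ℂ) ^ 2) • P := by
      push_cast; module
    rw [e1, e2, Matrix.smul_mul, Matrix.mul_smul, hQP]
    simp
  have hvals := eig_two_values hBH 1 (c ^ 2) hpoly
  have htrB : (Aᴴ * A).trace = ((1 * d + c ^ 2 * m : ℝ) : ℂ) := by
    rw [hB, Matrix.trace_add, Matrix.trace_smul, Matrix.trace_sub, Matrix.trace_one, htr]
    simp only [smul_eq_mul, Fintype.card_fin]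
    push_cast [hnd]
    ring
  have hsum := sum_eig_real hBH _ htrB
  have hmain : ∑ i, singularValues A i ^ p
      = ∑ i, Real.sqrt (hBH.eigenvalues i) ^ p := rfl
  by_cases hcc : c = 1
  · rw [hmain]
    have h1 : ∀ i, Real.sqrt (hBH.eigenvalues i) ^ p = 1 := by
      intro i
      rcases hvals i with h | h <;> rw [h] <;> simp [hcc]
    rw [Finset.sum_congr rfl fun i _ => h1 i, Finset.sum_const, hcc, Real.one_rpow, mul_one]
    simp only [Finset.card_univ, Fintype.card_fin, nsmul_eq_mul, mul_one]
    rw [hnd]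
    push_cast
    ring
  · have hc2 : c ^ 2 - 1 ≠ 0 := by
      intro h
      have h' : (c - 1) * (c + 1) = 0 := by
        rw [show (c - 1) * (c + 1) = c ^ 2 - 1 from by ring, h]
      rcases mul_eq_zero.mp h' with h'' | h''
      · exact hcc (by linarith)
      · linarith
    set β : ℝ := (c ^ p - 1) / (c ^ 2 - 1) with hβ
    have ha : Real.sqrt 1 ^ p = (1 - β) + β * 1 := by
      simp only [Real.sqrt_one, Real.one_rpow]; ring
    have hb : Real.sqrt (c ^ 2) ^ p = (1 - β) + β * c ^ 2 := by
      rw [Real.sqrt_sq hc0.le, hβ]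
      field_simp
      ring
    rw [hmain,
      sum_interp hBH.eigenvalues 1 (c ^ 2) (1 - β) β hvals (fun x => Real.sqrt x ^ p) ha hb,
      hsum, hnd]
    have hc2' : (-1 + c ^ 2) ≠ 0 := fun h => hc2 (by linarith)
    have key : (-1 + c ^ 2) * (-1 + c ^ 2)⁻¹ = 1 := mul_inv_cancel₀ hc2'
    push_cast
    have hβ' : β * (c ^ 2 - 1) = c ^ p - 1 := by rw [hβ, div_mul_cancel₀ _ hc2]
    linear_combination (↑m : ℝ) * hβ'

open Matrix in
lemma sumTA_eq {n : ℕ} (hn : 2 ≤ n) (d : ℕ) (hd1 : 1 ≤ d) (p : ℝ) (hp : 1 ≤ p)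
    (i0 i1 : Fin n) (hne : i0 ≠ i1)
    (TA : Matrix (Fin n) (Fin n) ℂ)
    (hTA : TA = (d : ℂ) • Matrix.single i0 i0 1
        - (d : ℂ) • Matrix.single i1 i1 1) :
    ∑ i, singularValues TA i ^ p = 2 * (d : ℝ) ^ p := by
  have hp0 : p ≠ 0 := by linarith
  have hd0 : (0 : ℝ) < d := by positivity
  set E0 : Matrix (Fin n) (Fin n) ℂ := Matrix.single i0 i0 1 with hE0
  set E1 : Matrix (Fin n) (Fin n) ℂ := Matrix.single i1 i1 1 with hE1
  have hE00 : E0 * E0 = E0 := by rw [hE0, Matrix.single_mul_single_same]; norm_num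
  have hE11 : E1 * E1 = E1 := by rw [hE1, Matrix.single_mul_single_same]; norm_num
  have hE01 : E0 * E1 = 0 := Matrix.single_mul_single_of_ne _ _ _ _ hne _
  have hE10 : E1 * E0 = 0 := Matrix.single_mul_single_of_ne _ _ _ _ hne.symm _
  have hTAH : TAᴴ = TA := by
    rw [hTA, Matrix.conjTranspose_sub, Matrix.conjTranspose_smul, Matrix.conjTranspose_smul,
      hE0, hE1, stdH, stdH]
    norm_num
  have hB : TAᴴ * TA = (((d : ℝ) ^ 2 : ℝ) : ℂ) • (E0 + E1) := by
    rw [hTAH, hTA]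
    have expand : ((d : ℂ) • E0 - (d : ℂ) • E1) * ((d : ℂ) • E0 - (d : ℂ) • E1)
        = ((d : ℂ) * d) • (E0 * E0) - ((d : ℂ) * d) • (E0 * E1)
          - ((d : ℂ) * d) • (E1 * E0) + ((d : ℂ) * d) • (E1 * E1) := by
      simp only [Matrix.sub_mul, Matrix.mul_sub, Matrix.smul_mul, Matrix.mul_smul, smul_smul]
      module
    rw [expand, hE00, hE11, hE01, hE10, smul_zero, sub_zero, sub_zero, ← smul_add]
    push_cast
    ring_nf
  have hBH : (TAᴴ * TA).IsHermitian := (Matrix.posSemidef_conjTranspose_mul_self TA).isHermitian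
  have hpoly : (TAᴴ * TA - ((0 : ℝ) : ℂ) • 1) * (TAᴴ * TA - (((d : ℝ) ^ 2 : ℝ) : ℂ) • 1) = 0 := by
    rw [hB]
    have e1 : (((d : ℝ) ^ 2 : ℝ) : ℂ) • (E0 + E1) - ((0 : ℝ) : ℂ) • (1 : Matrix (Fin n) (Fin n) ℂ)
        = (((d : ℝ) ^ 2 : ℝ) : ℂ) • (E0 + E1) := by
      push_cast; module
    have e2 : (E0 + E1) * (E0 + E1) = E0 + E1 := by
      rw [Matrix.add_mul, Matrix.mul_add, Matrix.mul_add, hE00, hE11, hE01, hE10, add_zero,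
        zero_add]
    rw [e1, Matrix.smul_mul, Matrix.mul_sub, Matrix.mul_smul, Matrix.mul_smul, Matrix.mul_one,
      e2, sub_self, smul_zero]
  have hvals := eig_two_values hBH 0 ((d : ℝ) ^ 2) hpoly
  have htrB : (TAᴴ * TA).trace = ((0 * (n - 2 : ℕ) + (d : ℝ) ^ 2 * 2 : ℝ) : ℂ) := by
    rw [hB, Matrix.trace_smul, Matrix.trace_add, hE0, hE1, Matrix.trace_single_eq_same,
      Matrix.trace_single_eq_same]
    simp only [smul_eq_mul]
    push_cast
    ring
  have hsum := sum_eig_real hBH _ htrB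
  have hmain : ∑ i, singularValues TA i ^ p
      = ∑ i, Real.sqrt (hBH.eigenvalues i) ^ p := rfl
  have ha : Real.sqrt 0 ^ p = 0 + ((d : ℝ) ^ p / (d : ℝ) ^ 2) * 0 := by
    simp [Real.sqrt_zero, Real.zero_rpow hp0]
  have hb : Real.sqrt ((d : ℝ) ^ 2) ^ p = 0 + ((d : ℝ) ^ p / (d : ℝ) ^ 2) * (d : ℝ) ^ 2 := by
    rw [Real.sqrt_sq hd0.le]
    field_simp
    ring
  rw [hmain,
    sum_interp hBH.eigenvalues 0 ((d : ℝ) ^ 2) 0 ((d : ℝ) ^ p / (d : ℝ) ^ 2) hvals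
      (fun x => Real.sqrt x ^ p) ha hb,
    hsum]
  have hd2 : ((d : ℝ) ^ 2) ≠ 0 := by positivity
  have e3 : (0 : ℝ) * ((n - 2 : ℕ) : ℝ) + (d : ℝ) ^ 2 * 2 = 2 * (d : ℝ) ^ 2 := by ring
  rw [e3]
  field_simp
  ring

/-- The bounds of Theorem 4 on the traceless Hermitian hyperplane are attained by the
completely positive trace preserving map `T(A) = |0⟩⟨0| tr(PA) + |1⟩⟨1| tr((𝟙−P)A)`:
taking a projection `P` of rank `d = n/2` for even `n` (resp. `d = (n+1)/2` for odd `n`)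
and `A = P − (d/(n−d))(𝟙−P)`, one gets `‖T(A)‖_p = (n/2)^{1-1/p} ‖A‖_p` (resp.
`‖T(A)‖_p = (2^{2-p}/((n-1)^{1-p}+(n+1)^{1-p}))^{1/p} ‖A‖_p`), for `1 ≤ p < ∞`. -/
theorem schattenNorm_traceless_bound_attained
    (n : ℕ) (hn : 2 ≤ n) (p : ℝ) (hp : 1 ≤ p)
    (d : ℕ) (hd : d = if Even n then n / 2 else (n + 1) / 2)
    (P : Matrix (Fin n) (Fin n) ℂ) (hP : P.IsHermitian) (hproj : P * P = P)
    (htr : P.trace = (d : ℂ))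
    (A : Matrix (Fin n) (Fin n) ℂ)
    (hA : A = P - ((d : ℂ) / ((n : ℂ) - (d : ℂ))) • (1 - P))
    (TA : Matrix (Fin n) (Fin n) ℂ)
    (hTA : TA = (P * A).trace • Matrix.single (⟨0, by omega⟩ : Fin n) ⟨0, by omega⟩ 1
        + ((1 - P) * A).trace • Matrix.single (⟨1, by omega⟩ : Fin n) ⟨1, by omega⟩ 1) :
    schattenNorm (ENNReal.ofReal p) TA
      = (if Even n then ((n : ℝ) / 2) ^ (1 - 1 / p)
          else ((2 : ℝ) ^ (2 - p) / (((n : ℝ) - 1) ^ (1 - p) + ((n : ℝ) + 1) ^ (1 - p))) ^ (1 / p))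
        * schattenNorm (ENNReal.ofReal p) A := by
  have hp0 : p ≠ 0 := by linarith
  have hppos : (0 : ℝ) < p := by linarith
  have hpt : (ENNReal.ofReal p).toReal = p := ENNReal.toReal_ofReal (by linarith)
  have hd1 : 1 ≤ d := by
    rw [hd]; split <;> omega
  have hdn : d < n := by
    rw [hd]; split
    · omega
    · rename_i h
      rcases Nat.even_or_odd n with he | ho
      · exact absurd he h
      · obtain ⟨k, hk⟩ := ho; omega
  have hnd : n = d + (n - d) := by omega
  have hm1 : 1 ≤ n - d := by omega
  have hm0 : ((n - d : ℕ) : ℂ) ≠ 0 := Nat.cast_ne_zero.mpr (by omega)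
  have hnmC : (n : ℂ) - (d : ℂ) = ((n - d : ℕ) : ℂ) := by push_cast [Nat.cast_sub hdn.le]; ring
  have hPQ : P * (1 - P) = 0 := by rw [mul_sub, mul_one, hproj, sub_self]
  have hQP : (1 - P) * P = 0 := by rw [sub_mul, one_mul, hproj, sub_self]
  have hQQ : (1 - P) * (1 - P) = 1 - P := by rw [sub_mul, one_mul, mul_sub, mul_one, hproj]; abel
  have hPA : P * A = P := by
    rw [hA, Matrix.mul_sub, Matrix.mul_smul, hPQ, smul_zero, sub_zero, hproj]
  have hQA : (1 - P) * A = -(((d : ℂ) / ((n : ℂ) - (d : ℂ))) • (1 - P)) := by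
    rw [hA, Matrix.mul_sub, Matrix.mul_smul, hQP, hQQ, zero_sub]
  have htrPA : (P * A).trace = (d : ℂ) := by rw [hPA, htr]
  have htrQA : ((1 - P) * A).trace = -(d : ℂ) := by
    rw [hQA, Matrix.trace_neg, Matrix.trace_smul, Matrix.trace_sub, Matrix.trace_one, htr,
      Fintype.card_fin, hnmC, smul_eq_mul, div_mul_cancel₀ _ hm0]
  have hTA2 : TA = (d : ℂ) • Matrix.single (⟨0, by omega⟩ : Fin n) ⟨0, by omega⟩ 1
      - (d : ℂ) • Matrix.single (⟨1, by omega⟩ : Fin n) ⟨1, by omega⟩ 1 := by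
    rw [hTA, htrPA, htrQA, neg_smul]
    abel
  have hne : (⟨0, by omega⟩ : Fin n) ≠ ⟨1, by omega⟩ := by simp [Fin.ext_iff]
  unfold schattenNorm
  rw [if_neg ENNReal.ofReal_ne_top, if_neg ENNReal.ofReal_ne_top, hpt,
    sumTA_eq hn d hd1 p hp _ _ hne TA hTA2]
  rcases Nat.even_or_odd n with he | ho
  · -- even case
    obtain ⟨k, hk⟩ := he
    have he' : Even n := ⟨k, hk⟩
    rw [if_pos he'] at hd ⊢
    have hdk : d = k := by omega
    have hk1 : 1 ≤ k := by omega
    have hK0 : (0 : ℝ) < (k : ℝ) := by exact_mod_cast hk1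
    have hc : (1 : ℝ) = (d : ℝ) / ((n - d : ℕ) : ℝ) := by
      rw [show n - d = k from by omega, hdk, div_self (by positivity)]
    rw [sumA_eq hnd hd1 hm1 p hp P A hP hproj htr hA 1 hc]
    have hdR : (d : ℝ) = (k : ℝ) := by rw [hdk]
    have hmR : ((n - d : ℕ) : ℝ) = (k : ℝ) := by rw [show n - d = k from by omega]
    have hnR : (n : ℝ) = 2 * (k : ℝ) := by rw [hk]; push_cast; ring
    rw [hdR, hmR, hnR, Real.one_rpow, mul_one]
    have lhs : (2 * (k : ℝ) ^ p) ^ (1 / p) = 2 ^ (1 / p) * (k : ℝ) := by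
      rw [Real.mul_rpow (by norm_num) (by positivity), ← Real.rpow_mul hK0.le,
        mul_one_div_cancel hp0, Real.rpow_one]
    have rhs1 : (k : ℝ) + (k : ℝ) = 2 * (k : ℝ) := by ring
    rw [lhs, rhs1, Real.mul_rpow (by norm_num) hK0.le,
      show 2 * (k : ℝ) / 2 = (k : ℝ) from by ring,
      show (k : ℝ) ^ (1 - 1 / p) * (2 ^ (1 / p) * (k : ℝ) ^ (1 / p))
        = 2 ^ (1 / p) * ((k : ℝ) ^ (1 - 1 / p) * (k : ℝ) ^ (1 / p)) from by ring,
      ← Real.rpow_add hK0]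
    norm_num
  · -- odd case
    obtain ⟨k, hk⟩ := ho
    have hnotev : ¬ Even n := by
      rw [Nat.even_iff, hk]; omega
    rw [if_neg hnotev] at hd ⊢
    have hdk : d = k + 1 := by omega
    have hmk : n - d = k := by omega
    have hk1 : 1 ≤ k := by omega
    have hK0 : (0 : ℝ) < (k : ℝ) := by exact_mod_cast hk1
    have hL0 : (0 : ℝ) < (k : ℝ) + 1 := by positivity
    have hc : ((k : ℝ) + 1) / (k : ℝ) = (d : ℝ) / ((n - d : ℕ) : ℝ) := by
      rw [hmk, hdk]; push_cast; ring
    rw [sumA_eq hnd hd1 hm1 p hp P A hP hproj htr hA (((k : ℝ) + 1) / (k : ℝ)) hc]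
    have hdR : (d : ℝ) = (k : ℝ) + 1 := by rw [hdk]; push_cast; ring
    have hmR : ((n - d : ℕ) : ℝ) = (k : ℝ) := by rw [hmk]
    have hn1 : (n : ℝ) - 1 = 2 * (k : ℝ) := by rw [hk]; push_cast; ring
    have hn2 : (n : ℝ) + 1 = 2 * ((k : ℝ) + 1) := by rw [hk]; push_cast; ring
    rw [hdR, hmR, hn1, hn2]
    set K : ℝ := (k : ℝ)
    set L : ℝ := K + 1 with hL
    have hS0 : (0 : ℝ) < (2 * K) ^ (1 - p) + (2 * L) ^ (1 - p) := by
      have := Real.rpow_pos_of_pos (by positivity : (0:ℝ) < 2 * K) (1 - p)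
      have := Real.rpow_pos_of_pos (by positivity : (0:ℝ) < 2 * L) (1 - p)
      linarith
    rw [← Real.mul_rpow (by positivity) (by positivity)]
    congr 1
    have e1 : (L / K) ^ p = L ^ p / K ^ p := Real.div_rpow hL0.le hK0.le p
    have e2 : (2 * K) ^ (1 - p) = 2 ^ (1 - p) * K ^ (1 - p) :=
      Real.mul_rpow (by norm_num) hK0.le
    have e3 : (2 * L) ^ (1 - p) = 2 ^ (1 - p) * L ^ (1 - p) :=
      Real.mul_rpow (by norm_num) hL0.le
    have e4 : K ^ (1 - p : ℝ) = K / K ^ p := by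
      rw [Real.rpow_sub hK0, Real.rpow_one]
    have e5 : L ^ (1 - p : ℝ) = L / L ^ p := by
      rw [Real.rpow_sub hL0, Real.rpow_one]
    have e6 : (2 : ℝ) ^ (2 - p) = 4 / 2 ^ p := by
      rw [Real.rpow_sub (by norm_num : (0:ℝ) < 2),
        show ((2:ℝ) ^ (2:ℝ)) = 4 from by
          rw [show (2:ℝ) = ((2:ℕ) : ℝ) from by norm_num, Real.rpow_natCast]; norm_num]
    have e7 : (2 : ℝ) ^ (1 - p : ℝ) = 2 / 2 ^ p := by
      rw [Real.rpow_sub (by norm_num : (0:ℝ) < 2), Real.rpow_one]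
    have hKp : (0 : ℝ) < K ^ p := Real.rpow_pos_of_pos hK0 _
    have hLp : (0 : ℝ) < L ^ p := Real.rpow_pos_of_pos hL0 _
    have h2p : (0 : ℝ) < (2 : ℝ) ^ p := Real.rpow_pos_of_pos (by norm_num) _
    rw [e1, e2, e3, e4, e5, e6, e7]
    have hden : K / K ^ p + L / L ^ p > 0 := by positivity
    field_simp
    ring
end

section
/- Let T : M_2(ℂ) → M_2(ℂ) be a positive trace preserving linear map and 1 ≤ p ≤ ∞. Then for every A ∈ M_2(ℂ) with tr A = 0 (A not assumed Hermitian), ‖T(A)‖_p ≤ ‖A‖_p. -/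
open scoped ENNReal ComplexOrder

open Matrix Complex

section Aux
lemma fin2_sup (f : Fin 2 → ℝ) : (⨆ i, f i) = max (f 0) (f 1) := by
  apply le_antisymm
  · apply ciSup_le; intro i; fin_cases i
    · exact le_max_left _ _
    · exact le_max_right _ _
  · apply max_le <;> exact le_ciSup (Set.finite_range f).bddAbove _

noncomputable def frob (A : Matrix (Fin 2) (Fin 2) ℂ) : ℝ :=
  normSq (A 0 0) + normSq (A 0 1) + normSq (A 1 0) + normSq (A 1 1)

lemma trace_eq_sum_ev {n : ℕ} (A : Matrix (Fin n) (Fin n) ℂ) (hA : A.IsHermitian) :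
    A.trace = ∑ i, (hA.eigenvalues i : ℂ) := by
  conv_lhs => rw [hA.spectral_theorem]
  rw [Unitary.conjStarAlgAut_apply, Matrix.trace_mul_cycle]
  rw [(Matrix.mem_unitaryGroup_iff').mp (hA.eigenvectorUnitary).2, one_mul, trace_diagonal]
  simp

lemma sv_nonneg (A : Matrix (Fin 2) (Fin 2) ℂ) (i : Fin 2) : 0 ≤ singularValues A i :=
  Real.sqrt_nonneg _

lemma sv_sq_add (A : Matrix (Fin 2) (Fin 2) ℂ) :
    singularValues A 0 ^ 2 + singularValues A 1 ^ 2 = frob A := by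
  have h := Matrix.posSemidef_conjTranspose_mul_self A
  have e0 := h.eigenvalues_nonneg 0
  have e1 := h.eigenvalues_nonneg 1
  have ht : (Aᴴ * A).trace = (frob A : ℂ) := by
    simp [Matrix.trace, Matrix.mul_apply, Fin.sum_univ_two, Matrix.conjTranspose_apply, frob,
      Matrix.diag]
    ring_nf
    simp [Complex.normSq_eq_conj_mul_self]
    ring
  have := trace_eq_sum_ev _ h.isHermitian
  rw [ht, Fin.sum_univ_two, ← Complex.ofReal_add] at this
  have hr := Complex.ofReal_inj.mp this.symm
  simp only [singularValues, Real.sq_sqrt e0, Real.sq_sqrt e1]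
  linarith

lemma sv_mul (A : Matrix (Fin 2) (Fin 2) ℂ) :
    singularValues A 0 * singularValues A 1 = ‖A.det‖ := by
  have h := Matrix.posSemidef_conjTranspose_mul_self A
  have e0 := h.eigenvalues_nonneg 0
  have hd : (Aᴴ * A).det = (normSq A.det : ℂ) := by
    rw [Matrix.det_mul, Matrix.det_conjTranspose, Complex.normSq_eq_conj_mul_self]; rfl
  have hpr := h.isHermitian.det_eq_prod_eigenvalues
  rw [Fin.prod_univ_two] at hpr
  have hc2 : ((normSq A.det : ℝ) : ℂ)
      = ((h.isHermitian.eigenvalues 0 * h.isHermitian.eigenvalues 1 : ℝ) : ℂ) := by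
    rw [← hd]; exact_mod_cast hpr
  have hr := Complex.ofReal_inj.mp hc2
  simp only [singularValues, ← Real.sqrt_mul e0]
  rw [← hr]
  rw [show Complex.normSq A.det = (‖A.det‖)^2 from (Complex.sq_norm _).symm]
  exact Real.sqrt_sq (norm_nonneg _)

lemma karamata2 {q a b a' b' : ℝ} (hq : 1 ≤ q) (hb : 0 ≤ b) (hba : b ≤ a)
    (hb' : 0 ≤ b') (hba' : b' ≤ a') (h1 : a' ≤ a) (h2 : a' + b' ≤ a + b) :
    a' ^ q + b' ^ q ≤ a ^ q + b ^ q := by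
  have hq0 : 0 ≤ q := le_trans zero_le_one hq
  rcases le_or_gt b' b with hbb | hbb
  · exact add_le_add (Real.rpow_le_rpow (le_trans hb' hba') h1 hq0)
      (Real.rpow_le_rpow hb' hbb hq0)
  · -- b < b' ≤ a' ≤ a, and a' + b' ≤ a + b
    have hC := convexOn_rpow (p := q) hq
    have hab : b < a := lt_of_lt_of_le hbb (le_trans hba' h1)
    set θ : ℝ := (a' - b) / (a - b) with hθ
    have hden : 0 < a - b := by linarith
    have hθ0 : 0 ≤ θ := div_nonneg (by linarith) hden.le
    have hθ1 : θ ≤ 1 := by rw [div_le_one hden]; linarith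
    have h1mθ : (0:ℝ) ≤ 1 - θ := by linarith
    have hsum : θ + (1 - θ) = 1 := by ring
    have hth : θ * (a - b) = a' - b := div_mul_cancel₀ _ hden.ne'
    have ha' : a' = θ * a + (1 - θ) * b := by nlinarith [hth]
    have key1 : a' ^ q ≤ θ * a ^ q + (1 - θ) * b ^ q := by
      have := hC.2 (Set.mem_Ici.mpr (le_trans hb hba)) (Set.mem_Ici.mpr hb)
        hθ0 h1mθ hsum
      simpa only [smul_eq_mul, ← ha'] using this
    -- b' ≤ (1-θ) a + θ b  since b' ≤ a + b - a'
    have key2 : b' ^ q ≤ (1 - θ) * a ^ q + θ * b ^ q := by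
      have hb'le : b' ≤ (1 - θ) * a + θ * b := by
        have : (1 - θ) * a + θ * b = a + b - a' := by rw [ha']; ring
        linarith [this]
      have hcx := hC.2 (Set.mem_Ici.mpr (le_trans hb hba)) (Set.mem_Ici.mpr hb)
        h1mθ hθ0 (by linarith : (1 - θ) + θ = 1)
      calc b' ^ q ≤ ((1 - θ) * a + θ * b) ^ q :=
            Real.rpow_le_rpow hb' hb'le hq0
        _ ≤ (1 - θ) * a ^ q + θ * b ^ q := by simpa only [smul_eq_mul] using hcx
    linarith

lemma complex_nonneg_iff {z : ℂ} : 0 ≤ z ↔ 0 ≤ z.re ∧ z.im = 0 := by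
  rw [Complex.le_def]; simp [eq_comm]

lemma psd_entries {M : Matrix (Fin 2) (Fin 2) ℂ} (h : M.PosSemidef) :
    0 ≤ (M 0 0).re ∧ 0 ≤ (M 1 1).re ∧ (M 0 0).im = 0 ∧ (M 1 1).im = 0 ∧
      M 1 0 = (starRingEnd ℂ) (M 0 1) ∧ normSq (M 0 1) ≤ (M 0 0).re * (M 1 1).re := by
  have herm := h.1
  have h10 : M 1 0 = (starRingEnd ℂ) (M 0 1) := by
    have := congrFun (congrFun herm 1) 0
    simp only [Matrix.conjTranspose_apply] at this
    exact this.symm ▸ rfl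
  have h00 : 0 ≤ M 0 0 := by
    have := h.dotProduct_mulVec_nonneg (Pi.single 0 1)
    simpa [dotProduct, Matrix.mulVec, Fin.sum_univ_two, Pi.single] using this
  have h11 : 0 ≤ M 1 1 := by
    have := h.dotProduct_mulVec_nonneg (Pi.single 1 1)
    simpa [dotProduct, Matrix.mulVec, Fin.sum_univ_two, Pi.single] using this
  rw [complex_nonneg_iff] at h00 h11
  refine ⟨h00.1, h11.1, h00.2, h11.2, h10, ?_⟩
  have hdet : M.det = ((h.isHermitian.eigenvalues 0 * h.isHermitian.eigenvalues 1 : ℝ) : ℂ) := by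
    rw [h.isHermitian.det_eq_prod_eigenvalues, Fin.prod_univ_two]; norm_cast
  have hdet_re : 0 ≤ M.det.re := by
    rw [hdet]
    simpa using mul_nonneg (h.eigenvalues_nonneg 0) (h.eigenvalues_nonneg 1)
  have hdc : M.det = M 0 0 * M 1 1 - M 0 1 * (starRingEnd ℂ) (M 0 1) := by
    rw [Matrix.det_fin_two, h10]
  rw [hdc] at hdet_re
  have e1 : (M 0 0 * M 1 1).re = (M 0 0).re * (M 1 1).re := by
    rw [Complex.mul_re, h00.2, h11.2]; ring
  have e2 : (M 0 1 * (starRingEnd ℂ) (M 0 1)).re = normSq (M 0 1) := by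
    rw [Complex.mul_conj]; simp
  rw [Complex.sub_re, e1, e2] at hdet_re
  linarith

lemma psd_of_entries {a d : ℝ} {z : ℂ} (ha : 0 ≤ a) (hd : 0 ≤ d)
    (hdet : normSq z ≤ a * d) :
    (!![(a : ℂ), z; (starRingEnd ℂ) z, (d : ℂ)]).PosSemidef := by
  refine Matrix.PosSemidef.of_dotProduct_mulVec_nonneg ?_ ?_
  · ext i j
    fin_cases i <;> fin_cases j <;>
      simp [Matrix.conjTranspose_apply, Complex.conj_ofReal]
  · intro x
    have expand : (star x) ⬝ᵥ ((!![(a : ℂ), z; (starRingEnd ℂ) z, (d : ℂ)]) *ᵥ x) =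
        (a : ℂ) * (starRingEnd ℂ) (x 0) * x 0 + z * (starRingEnd ℂ) (x 0) * x 1 +
        (starRingEnd ℂ) z * (starRingEnd ℂ) (x 1) * x 0 + (d : ℂ) * (starRingEnd ℂ) (x 1) * x 1 := by
      simp [dotProduct, Matrix.mulVec, Fin.sum_univ_two]
      ring
    have hcw : (starRingEnd ℂ) z * (starRingEnd ℂ) (x 1) * x 0 =
        (starRingEnd ℂ) (z * (starRingEnd ℂ) (x 0) * x 1) := by
      simp only [_root_.map_mul, Complex.conj_conj]; ring
    rw [expand, hcw, complex_nonneg_iff]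
    have h1 : ((a:ℂ) * (starRingEnd ℂ) (x 0) * x 0).re = a * normSq (x 0) := by
      simp [Complex.normSq_apply, Complex.mul_re, Complex.mul_im]; ring
    have h2 : ((d:ℂ) * (starRingEnd ℂ) (x 1) * x 1).re = d * normSq (x 1) := by
      simp [Complex.normSq_apply, Complex.mul_re, Complex.mul_im]; ring
    have h1i : ((a:ℂ) * (starRingEnd ℂ) (x 0) * x 0).im = 0 := by
      simp [Complex.mul_im, Complex.mul_re]; ring
    have h2i : ((d:ℂ) * (starRingEnd ℂ) (x 1) * x 1).im = 0 := by
      simp [Complex.mul_im, Complex.mul_re]; ring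
    set w := z * (starRingEnd ℂ) (x 0) * x 1 with hw
    constructor
    · simp only [Complex.add_re, h1, h2, Complex.conj_re]
      have habs : |w.re| ≤ ‖z‖ * ‖x 0‖ * ‖x 1‖ := by
        calc |w.re| ≤ ‖w‖ := Complex.abs_re_le_norm _
          _ = ‖z‖ * ‖x 0‖ * ‖x 1‖ := by
            rw [hw, norm_mul, norm_mul, Complex.norm_conj]
      have hzsq : (‖z‖)^2 ≤ a * d := by rw [Complex.sq_norm]; exact hdet
      have hza : ‖z‖ ≤ Real.sqrt a * Real.sqrt d := by
        rw [← Real.sqrt_mul ha]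
        calc ‖z‖ = Real.sqrt ((‖z‖)^2) :=
              (Real.sqrt_sq (norm_nonneg z)).symm
          _ ≤ Real.sqrt (a*d) := Real.sqrt_le_sqrt hzsq
      have huv : 0 ≤ ‖x 0‖ * ‖x 1‖ :=
        mul_nonneg (norm_nonneg _) (norm_nonneg _)
      have hkey := mul_le_mul_of_nonneg_right hza huv
      have hs1 := Real.sq_sqrt ha
      have hs2 := Real.sq_sqrt hd
      have hnsq0 : normSq (x 0) = (‖x 0‖)^2 := (Complex.sq_norm _).symm
      have hnsq1 : normSq (x 1) = (‖x 1‖)^2 := (Complex.sq_norm _).symm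
      rw [hnsq0, hnsq1]
      nlinarith [abs_le.mp habs,
        sq_nonneg (Real.sqrt a * ‖x 0‖ - Real.sqrt d * ‖x 1‖)]
    · simp only [Complex.add_im, h1i, h2i, Complex.conj_im]
      ring

lemma scalar_key {g w1 w2 s1 s2 r1 r2 : ℝ} (h1 : 0 ≤ r1) (h2 : 0 ≤ r2)
    (h3 : s1^2 + s2^2 ≤ r1 * r2) (h4 : 0 ≤ r1 - g) (h5 : 0 ≤ r2 + g)
    (h6 : (s1 - w1)^2 + (s2 - w2)^2 ≤ (r1 - g) * (r2 + g)) :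
    g^2 + w1^2 + w2^2 ≤ (r1 + r2)^2 := by
  nlinarith [sq_nonneg (s1-w1), sq_nonneg (s2-w2), sq_nonneg s1, sq_nonneg s2,
    sq_nonneg (r1-r2), sq_nonneg (r1+r2-g), sq_nonneg (w1+s1), sq_nonneg (w2+s2),
    sq_nonneg (w1-2*s1), sq_nonneg (w2-2*s2), mul_nonneg h4 h5, mul_nonneg h1 h2,
    sq_nonneg (g - r1 + r2), sq_nonneg (g + r2 - r1)]

lemma herm_traceless_entries {H : Matrix (Fin 2) (Fin 2) ℂ} (hH : H.IsHermitian)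
    (htr : H.trace = 0) :
    H 0 0 = ((H 0 0).re : ℂ) ∧ H 1 1 = -((H 0 0).re : ℂ) ∧
      H 1 0 = (starRingEnd ℂ) (H 0 1) := by
  have h00 : (H 0 0).im = 0 := by
    have := congrFun (congrFun hH 0) 0
    simp only [Matrix.conjTranspose_apply] at this
    have := congrArg Complex.im this
    simp at this; linarith
  have h10 : H 1 0 = (starRingEnd ℂ) (H 0 1) := by
    have := congrFun (congrFun hH 1) 0
    simp only [Matrix.conjTranspose_apply] at this
    exact this.symm ▸ rfl
  have htr' : H 1 1 = -(H 0 0) := by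
    have : H 0 0 + H 1 1 = 0 := by
      simpa [Matrix.trace, Fin.sum_univ_two, Matrix.diag] using htr
    linear_combination this
  refine ⟨?_, ?_, h10⟩
  · exact Complex.ext rfl h00
  · rw [htr']; exact congrArg Neg.neg (Complex.ext rfl h00)

lemma herm_decomp {H : Matrix (Fin 2) (Fin 2) ℂ} (hH : H.IsHermitian) (htr : H.trace = 0) :
    ∃ P Q : Matrix (Fin 2) (Fin 2) ℂ, P.PosSemidef ∧ Q.PosSemidef ∧ H = P - Q ∧
      P.trace = (Real.sqrt (((H 0 0).re)^2 + normSq (H 0 1)) : ℂ) ∧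
      Q.trace = (Real.sqrt (((H 0 0).re)^2 + normSq (H 0 1)) : ℂ) := by
  obtain ⟨e00, e11, e10⟩ := herm_traceless_entries hH htr
  set h : ℝ := (H 0 0).re
  set z : ℂ := H 0 1
  set lam : ℝ := Real.sqrt (h^2 + normSq z) with hlam
  have hnn : 0 ≤ h^2 + normSq z := add_nonneg (sq_nonneg h) (normSq_nonneg z)
  have hlam2 : lam^2 = h^2 + normSq z := Real.sq_sqrt hnn
  have hlam_abs : |h| ≤ lam := by
    rw [← Real.sqrt_sq_eq_abs]
    exact Real.sqrt_le_sqrt (by nlinarith [normSq_nonneg z])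
  have hle1 : 0 ≤ (lam + h)/2 := by cases abs_le.mp hlam_abs; linarith
  have hle2 : 0 ≤ (lam - h)/2 := by cases abs_le.mp hlam_abs; linarith
  refine ⟨!![(((lam+h)/2 : ℝ) : ℂ), z/2; (starRingEnd ℂ) (z/2), (((lam-h)/2 : ℝ) : ℂ)],
          !![(((lam-h)/2 : ℝ) : ℂ), -z/2; (starRingEnd ℂ) (-z/2), (((lam+h)/2 : ℝ) : ℂ)],
          ?_, ?_, ?_, ?_, ?_⟩
  · exact psd_of_entries hle1 hle2 (by
      rw [normSq_div]
      simp [normSq_ofNat]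
      nlinarith [hlam2])
  · exact psd_of_entries hle2 hle1 (by
      rw [show (-z/2 : ℂ) = (-z)/2 by ring, normSq_div]
      simp [normSq_neg, normSq_ofNat]
      nlinarith [hlam2])
  · ext i j
    fin_cases i <;> fin_cases j <;>
      simp [Matrix.sub_apply, e00, e11, e10, map_div₀, _root_.map_neg, Complex.conj_ofNat] <;> push_cast <;> ring
  · simp [Matrix.trace, Fin.sum_univ_two, Matrix.diag]; push_cast; ring
  · simp [Matrix.trace, Fin.sum_univ_two, Matrix.diag]; push_cast; ring

lemma image_herm {T : Matrix (Fin 2) (Fin 2) ℂ →ₗ[ℂ] Matrix (Fin 2) (Fin 2) ℂ}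
    (hTpos : IsPositiveMatrixMap T) {H : Matrix (Fin 2) (Fin 2) ℂ}
    (hH : H.IsHermitian) (htr : H.trace = 0) : (T H).IsHermitian := by
  obtain ⟨P, Q, hP, hQ, hPQ, -, -⟩ := herm_decomp hH htr
  rw [hPQ, map_sub]
  exact (hTpos P hP).1.sub (hTpos Q hQ).1

lemma frob_contract {T : Matrix (Fin 2) (Fin 2) ℂ →ₗ[ℂ] Matrix (Fin 2) (Fin 2) ℂ}
    (hTpos : IsPositiveMatrixMap T) (hTtr : IsTracePreservingMap T)
    {H : Matrix (Fin 2) (Fin 2) ℂ} (hH : H.IsHermitian) (htr : H.trace = 0) :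
    frob (T H) ≤ frob H := by
  obtain ⟨P, Q, hP, hQ, hPQ, hPtr, hQtr⟩ := herm_decomp hH htr
  obtain ⟨e00, e11, e10⟩ := herm_traceless_entries hH htr
  set h : ℝ := (H 0 0).re
  set z : ℂ := H 0 1
  set lam : ℝ := Real.sqrt (h^2 + normSq z) with hlam
  have hlam2 : lam^2 = h^2 + normSq z :=
    Real.sq_sqrt (add_nonneg (sq_nonneg h) (normSq_nonneg z))
  -- frob H = 2 lam^2
  have hfH : frob H = 2 * lam^2 := by
    rw [hlam2]
    simp only [frob, e00, e11, e10, normSq_conj, normSq_neg, normSq_ofReal]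
    ring
  -- T H entries
  have hXherm : (T H).IsHermitian := image_herm hTpos hH htr
  have hXtr : (T H).trace = 0 := by rw [hTtr H, htr]
  obtain ⟨f00, f11, f10⟩ := herm_traceless_entries hXherm hXtr
  set g : ℝ := ((T H) 0 0).re
  set w : ℂ := (T H) 0 1
  have hfX : frob (T H) = 2 * (g^2 + normSq w) := by
    simp only [frob, f00, f11, f10, normSq_conj, normSq_neg, normSq_ofReal]
    ring
  -- R := T P, S := T Q
  have hRpsd := hTpos P hP
  have hSpsd := hTpos Q hQ
  obtain ⟨r1n, r2n, ri1, ri2, rh, rdet⟩ := psd_entries hRpsd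
  have hX : T H = T P - T Q := by rw [hPQ, map_sub]
  -- trace of R
  have hRtr : (T P).trace = (lam : ℂ) := by rw [hTtr P, hPtr]
  have hRtr_re : ((T P) 0 0).re + ((T P) 1 1).re = lam := by
    have := congrArg Complex.re hRtr
    simpa [Matrix.trace, Fin.sum_univ_two, Matrix.diag] using this
  -- S entries
  have hS00 : (T Q) 0 0 = (T P) 0 0 - T H 0 0 := by
    rw [hX]; simp [Matrix.sub_apply]
  have hS11 : (T Q) 1 1 = (T P) 1 1 - T H 1 1 := by
    rw [hX]; simp [Matrix.sub_apply]
  have hS01 : (T Q) 0 1 = (T P) 0 1 - T H 0 1 := by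
    rw [hX]; simp [Matrix.sub_apply]
  obtain ⟨s1n, s2n, si1, si2, sh, sdet⟩ := psd_entries hSpsd
  rw [hS00, hS11, hS01] at *
  -- scalars
  set r1 : ℝ := ((T P) 0 0).re
  set r2 : ℝ := ((T P) 1 1).re
  set s1 : ℝ := ((T P) 0 1).re
  set s2 : ℝ := ((T P) 0 1).im
  have hg00 : (T H 0 0).re = g := rfl
  have hg00i : (T H 0 0).im = 0 := by rw [f00]; simp
  have hg11 : (T H 1 1).re = -g := by rw [f11]; simp
  have hg11i : (T H 1 1).im = 0 := by rw [f11]; simp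
  have key := scalar_key (g := g) (w1 := w.re) (w2 := w.im)
    (s1 := s1) (s2 := s2) (r1 := r1) (r2 := r2)
    r1n r2n
    (by
      have e : s1^2 + s2^2 = normSq ((T P) 0 1) := by
        simp [Complex.normSq_apply]; ring
      rw [e]; exact rdet)
    (by simp only [Complex.sub_re, hg00] at s1n; linarith)
    (by simp only [Complex.sub_re, hg11] at s2n; linarith)
    (by
      have : normSq ((T P) 0 1 - T H 0 1) = (s1 - w.re)^2 + (s2 - w.im)^2 := by
        simp [Complex.normSq_apply, Complex.sub_re, Complex.sub_im]; ring
      rw [this] at sdet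
      simp only [Complex.sub_re, hg00, hg11] at sdet
      convert sdet using 2 <;> ring)
  have hnw : normSq w = w.re^2 + w.im^2 := by simp [Complex.normSq_apply]; ring
  rw [hfX, hfH, hnw, ← hRtr_re]
  nlinarith [key]

noncomputable def Hmat (c : ℂ) (M : Matrix (Fin 2) (Fin 2) ℂ) : Matrix (Fin 2) (Fin 2) ℂ :=
  (2⁻¹ : ℂ) • (c • M + (starRingEnd ℂ) c • Mᴴ)

lemma hmat_herm (c : ℂ) (M : Matrix (Fin 2) (Fin 2) ℂ) : (Hmat c M).IsHermitian := by
  unfold Matrix.IsHermitian Hmat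
  ext i j
  simp [Matrix.conjTranspose_apply, Matrix.add_apply, Matrix.smul_apply]
  ring

lemma hmat_trace (c : ℂ) {M : Matrix (Fin 2) (Fin 2) ℂ} (htr : M.trace = 0) :
    (Hmat c M).trace = 0 := by
  have h11 : M 1 1 = -(M 0 0) := by
    have : M 0 0 + M 1 1 = 0 := by
      simpa [Matrix.trace, Fin.sum_univ_two, Matrix.diag] using htr
    linear_combination this
  simp [Hmat, Matrix.trace, Fin.sum_univ_two, Matrix.diag, Matrix.conjTranspose_apply, h11]
  ring

lemma normSq_unit_comb {c : ℂ} (hc : normSq c = 1) (u v : ℂ) :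
    normSq (c * u + (starRingEnd ℂ) c * (starRingEnd ℂ) v)
      = normSq u + normSq v + 2 * ((c^2) * (u * v)).re := by
  have hc' : c.re^2 + c.im^2 = 1 := by
    rw [← hc]; simp [Complex.normSq_apply]; ring
  simp only [Complex.normSq_apply, Complex.add_re, Complex.add_im, Complex.mul_re,
    Complex.mul_im, Complex.conj_re, Complex.conj_im, pow_two]
  linear_combination (u.re*u.re + u.im*u.im + v.re*v.re + v.im*v.im) * hc'

lemma frob_hmat {c : ℂ} (hc : normSq c = 1) {M : Matrix (Fin 2) (Fin 2) ℂ}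
    (htr : M.trace = 0) :
    2 * frob (Hmat c M) = frob M + 2 * ((c^2) * (-M.det)).re := by
  have h11 : M 1 1 = -(M 0 0) := by
    have : M 0 0 + M 1 1 = 0 := by
      simpa [Matrix.trace, Fin.sum_univ_two, Matrix.diag] using htr
    linear_combination this
  have hdet : -M.det = M 0 0 ^ 2 + M 0 1 * M 1 0 := by
    rw [Matrix.det_fin_two, h11]; ring
  have e00 : Hmat c M 0 0 = 2⁻¹ * (c * (M 0 0) + (starRingEnd ℂ) c * (starRingEnd ℂ) (M 0 0)) := by
    simp [Hmat, Matrix.conjTranspose_apply]; try ring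
  have e11 : Hmat c M 1 1 = 2⁻¹ * (c * (-(M 0 0)) + (starRingEnd ℂ) c * (starRingEnd ℂ) (-(M 0 0))) := by
    simp [Hmat, Matrix.conjTranspose_apply, h11]; try ring
  have e01 : Hmat c M 0 1 = 2⁻¹ * (c * (M 0 1) + (starRingEnd ℂ) c * (starRingEnd ℂ) (M 1 0)) := by
    simp [Hmat, Matrix.conjTranspose_apply]; try ring
  have e10 : Hmat c M 1 0 = 2⁻¹ * (c * (M 1 0) + (starRingEnd ℂ) c * (starRingEnd ℂ) (M 0 1)) := by
    simp [Hmat, Matrix.conjTranspose_apply]; try ring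
  have hns : ∀ ζ : ℂ, normSq (2⁻¹ * ζ) = normSq ζ / 4 := by
    intro ζ; rw [normSq_mul]; norm_num; try ring
  rw [hdet]
  unfold frob
  rw [e00, e01, e10, e11, hns, hns, hns, hns,
    normSq_unit_comb hc, normSq_unit_comb hc, normSq_unit_comb hc, normSq_unit_comb hc]
  have hre : ((c^2) * (M 0 0 ^ 2 + M 0 1 * M 1 0)).re
      = ((c^2) * (M 0 0 * M 0 0)).re + ((c^2) * (M 0 1 * M 1 0)).re := by
    rw [show (c^2) * (M 0 0 ^ 2 + M 0 1 * M 1 0)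
        = (c^2) * (M 0 0 * M 0 0) + (c^2) * (M 0 1 * M 1 0) by ring, Complex.add_re]
  rw [hre]
  have h1 : ((c^2) * (-(M 0 0) * -(M 0 0))).re = ((c^2) * (M 0 0 * M 0 0)).re := by ring_nf
  have h2 : ((c^2) * (M 1 0 * M 0 1)).re = ((c^2) * (M 0 1 * M 1 0)).re := by ring_nf
  rw [h1, h2, normSq_neg, h11, normSq_neg]
  ring

lemma exists_unit_sq (z : ℂ) : ∃ c : ℂ, normSq c = 1 ∧ c^2 * z = (‖z‖ : ℂ) := by
  by_cases hz : z = 0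
  · exact ⟨1, by simp, by simp [hz]⟩
  · refine ⟨Complex.exp (-(z.arg/2) * Complex.I), ?_, ?_⟩
    · have habs : ‖Complex.exp (-(z.arg/2) * Complex.I)‖ = 1 := by
        rw [show (-(z.arg/2) * Complex.I : ℂ) = ((-(z.arg/2) : ℝ) : ℂ) * Complex.I by push_cast; ring]
        exact Complex.norm_exp_ofReal_mul_I _
      rw [← Complex.sq_norm, habs]; norm_num
    · have hsq : (Complex.exp (-(z.arg/2) * Complex.I))^2 = Complex.exp (-z.arg * Complex.I) := by
        rw [← Complex.exp_nat_mul]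
        congr 1; ring
      rw [hsq]
      have := Complex.norm_mul_exp_arg_mul_I z
      calc Complex.exp (-z.arg * Complex.I) * z
          = Complex.exp (-z.arg * Complex.I) * ((‖z‖ : ℂ) * Complex.exp (z.arg * Complex.I)) := by rw [this]
        _ = (‖z‖ : ℂ) * Complex.exp (-z.arg * Complex.I + z.arg * Complex.I) := by
            rw [Complex.exp_add]; ring
        _ = (‖z‖ : ℂ) := by simp

lemma conj_image {T : Matrix (Fin 2) (Fin 2) ℂ →ₗ[ℂ] Matrix (Fin 2) (Fin 2) ℂ}
    (hTpos : IsPositiveMatrixMap T) {A : Matrix (Fin 2) (Fin 2) ℂ} (htr : A.trace = 0) :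
    T Aᴴ = (T A)ᴴ := by
  set H0 : Matrix (Fin 2) (Fin 2) ℂ := (2⁻¹ : ℂ) • (A + Aᴴ) with hH0
  set K0 : Matrix (Fin 2) (Fin 2) ℂ := (-Complex.I/2) • (A - Aᴴ) with hK0
  have htrH : Aᴴ.trace = 0 := by rw [Matrix.trace_conjTranspose, htr]; simp
  have hH0herm : H0.IsHermitian := by
    unfold Matrix.IsHermitian
    ext i j
    simp [hH0, Matrix.conjTranspose_apply, Matrix.add_apply, Matrix.smul_apply]
    ring
  have hK0herm : K0.IsHermitian := by
    unfold Matrix.IsHermitian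
    ext i j
    simp [hK0, Matrix.conjTranspose_apply, Matrix.sub_apply, Matrix.smul_apply, Complex.ext_iff]
    constructor <;> ring
  have hH0tr : H0.trace = 0 := by
    simp [hH0, Matrix.trace_smul, Matrix.trace_add, htr, htrH]
  have hK0tr : K0.trace = 0 := by
    simp [hK0, Matrix.trace_smul, Matrix.trace_sub, htr, htrH]
  have hA : A = H0 + Complex.I • K0 := by
    ext i j
    simp [hH0, hK0, Matrix.add_apply, Matrix.smul_apply, Matrix.sub_apply]
    ring_nf
    simp [Complex.I_sq]
    ring
  have hAH : Aᴴ = H0 - Complex.I • K0 := by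
    ext i j
    simp [hH0, hK0, Matrix.add_apply, Matrix.smul_apply, Matrix.sub_apply,
      Matrix.conjTranspose_apply]
    ring_nf
    simp [Complex.I_sq]
    ring
  have h1 := image_herm hTpos hH0herm hH0tr
  have h2 := image_herm hTpos hK0herm hK0tr
  clear_value H0 K0
  have e1 : T Aᴴ = T H0 - Complex.I • T K0 := by rw [hAH, map_sub, T.map_smul]
  have e2 : T A = T H0 + Complex.I • T K0 := by
    conv_lhs => rw [hA]
    rw [map_add, T.map_smul]
  rw [e1, e2, Matrix.conjTranspose_add, Matrix.conjTranspose_smul, h1, h2, Complex.star_def,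
    Complex.conj_I, neg_smul, sub_eq_add_neg]

lemma hmat_image {T : Matrix (Fin 2) (Fin 2) ℂ →ₗ[ℂ] Matrix (Fin 2) (Fin 2) ℂ}
    (hTpos : IsPositiveMatrixMap T) {A : Matrix (Fin 2) (Fin 2) ℂ} (htr : A.trace = 0)
    (c : ℂ) : T (Hmat c A) = Hmat c (T A) := by
  unfold Hmat
  rw [T.map_smul, map_add, T.map_smul, T.map_smul, conj_image hTpos htr]

lemma ineq1 {T : Matrix (Fin 2) (Fin 2) ℂ →ₗ[ℂ] Matrix (Fin 2) (Fin 2) ℂ}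
    (hTpos : IsPositiveMatrixMap T) (hTtr : IsTracePreservingMap T)
    {A : Matrix (Fin 2) (Fin 2) ℂ} (htr : A.trace = 0) :
    frob (T A) + 2 * ‖(T A).det‖ ≤ frob A + 2 * ‖A.det‖ := by
  obtain ⟨c, hc, hcz⟩ := exists_unit_sq (-(T A).det)
  have htrB : (T A).trace = 0 := by rw [hTtr A, htr]
  have h1 : 2 * frob (Hmat c (T A)) = frob (T A) + 2 * ‖(T A).det‖ := by
    rw [frob_hmat hc htrB, hcz]
    rw [show ‖-(T A).det‖ = ‖(T A).det‖ by rw [norm_neg]]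
    simp
  have h2 : Hmat c (T A) = T (Hmat c A) := (hmat_image hTpos htr c).symm
  have h3 : frob (T (Hmat c A)) ≤ frob (Hmat c A) :=
    frob_contract hTpos hTtr (hmat_herm c A) (hmat_trace c htr)
  have h4 : 2 * frob (Hmat c A) = frob A + 2 * ((c^2) * (-A.det)).re :=
    frob_hmat hc htr
  have h5 : ((c^2) * (-A.det)).re ≤ ‖A.det‖ := by
    calc ((c^2) * (-A.det)).re ≤ ‖(c^2) * (-A.det)‖ := Complex.re_le_norm _
      _ = ‖A.det‖ := by
        rw [norm_mul, norm_neg, norm_pow]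
        have : ‖c‖ = 1 := by
          rw [← Complex.sq_norm] at hc
          nlinarith [norm_nonneg c]
        rw [this]; norm_num
  rw [h2] at h1
  linarith

lemma frob_nonneg (M : Matrix (Fin 2) (Fin 2) ℂ) : 0 ≤ frob M := by
  unfold frob
  have := normSq_nonneg (M 0 0); have := normSq_nonneg (M 0 1)
  have := normSq_nonneg (M 1 0); have := normSq_nonneg (M 1 1); linarith

lemma frob_ge_det (M : Matrix (Fin 2) (Fin 2) ℂ) : 2 * ‖M.det‖ ≤ frob M := by
  have hd : ‖M.det‖ ≤ ‖M 0 0‖ * ‖M 1 1‖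
      + ‖M 0 1‖ * ‖M 1 0‖ := by
    rw [Matrix.det_fin_two]
    calc ‖M 0 0 * M 1 1 - M 0 1 * M 1 0‖
        ≤ ‖M 0 0 * M 1 1‖ + ‖M 0 1 * M 1 0‖ := by
          exact (norm_sub_le _ _)
      _ = _ := by rw [norm_mul, norm_mul]
  have e : ∀ z : ℂ, normSq z = (‖z‖)^2 := fun z => (Complex.sq_norm z).symm
  unfold frob
  rw [e, e, e, e]
  nlinarith [sq_nonneg (‖M 0 0‖ - ‖M 1 1‖),
    sq_nonneg (‖M 0 1‖ - ‖M 1 0‖)]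

lemma frob_smul_unit {c : ℂ} (hc : normSq c = 1) (M : Matrix (Fin 2) (Fin 2) ℂ) :
    frob (c • M) = frob M := by
  unfold frob
  simp [Matrix.smul_apply, normSq_mul, hc]

-- Cartesian split for traceless M

lemma frob_split {M : Matrix (Fin 2) (Fin 2) ℂ} (htr : M.trace = 0) :
    frob M = frob (Hmat 1 M) + frob (Hmat (-Complex.I) M) := by
  have h11 : M 1 1 = -(M 0 0) := by
    have : M 0 0 + M 1 1 = 0 := by
      simpa [Matrix.trace, Fin.sum_univ_two, Matrix.diag] using htr
    linear_combination this
  unfold frob Hmat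
  simp only [Matrix.smul_apply, Matrix.add_apply, Matrix.conjTranspose_apply, h11,
    Complex.normSq_apply, Complex.mul_re, Complex.mul_im, Complex.add_re, Complex.add_im,
    Complex.conj_re, Complex.conj_im, Complex.neg_re, Complex.neg_im, Complex.I_re,
    Complex.I_im, Complex.one_re, Complex.one_im, Complex.inv_re, Complex.inv_im]
  norm_num
  ring

lemma det_re_split {M : Matrix (Fin 2) (Fin 2) ℂ} (htr : M.trace = 0) :
    (M.det).re = (frob (Hmat (-Complex.I) M) - frob (Hmat 1 M)) / 2 := by
  have h11 : M 1 1 = -(M 0 0) := by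
    have : M 0 0 + M 1 1 = 0 := by
      simpa [Matrix.trace, Fin.sum_univ_two, Matrix.diag] using htr
    linear_combination this
  rw [Matrix.det_fin_two]
  unfold frob Hmat
  simp only [Matrix.smul_apply, Matrix.add_apply, Matrix.conjTranspose_apply, h11,
    Complex.normSq_apply, Complex.mul_re, Complex.mul_im, Complex.add_re, Complex.add_im,
    Complex.conj_re, Complex.conj_im, Complex.neg_re, Complex.neg_im, Complex.I_re,
    Complex.I_im, Complex.one_re, Complex.one_im, Complex.inv_re, Complex.inv_im,
    Complex.sub_re]
  norm_num
  ring

lemma sqrt_comb {x y D F : ℝ} (hx : 0 ≤ x) (hy : 0 ≤ y) (hF : F = x + y) (hD : 0 ≤ D)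
    (habs : |x - y| ≤ 2 * D) (hFD : 2 * D ≤ F) :
    Real.sqrt (F + 2*D) + Real.sqrt (F - 2*D) ≤ Real.sqrt (2*x) + Real.sqrt (2*y) := by
  have h1 : 0 ≤ F + 2*D := by linarith
  have h2 : 0 ≤ F - 2*D := by linarith
  have key : (F + 2*D) * (F - 2*D) ≤ (2*x) * (2*y) := by
    have := abs_le.mp habs
    nlinarith
  have e1 : (Real.sqrt (F + 2*D) + Real.sqrt (F - 2*D))^2
      = 2*F + 2 * Real.sqrt ((F + 2*D) * (F - 2*D)) := by
    rw [add_sq, Real.sq_sqrt h1, Real.sq_sqrt h2, Real.sqrt_mul h1]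
    ring
  have e2 : (Real.sqrt (2*x) + Real.sqrt (2*y))^2
      = 2*F + 2 * Real.sqrt ((2*x) * (2*y)) := by
    rw [add_sq, Real.sq_sqrt (by linarith : (0:ℝ) ≤ 2*x),
      Real.sq_sqrt (by linarith : (0:ℝ) ≤ 2*y), Real.sqrt_mul (by linarith : (0:ℝ) ≤ 2*x)]
    rw [hF]; ring
  have hmono : Real.sqrt ((F + 2*D) * (F - 2*D)) ≤ Real.sqrt ((2*x) * (2*y)) :=
    Real.sqrt_le_sqrt key
  have hsq : (Real.sqrt (F + 2*D) + Real.sqrt (F - 2*D))^2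
      ≤ (Real.sqrt (2*x) + Real.sqrt (2*y))^2 := by rw [e1, e2]; linarith
  have hL : 0 ≤ Real.sqrt (F + 2*D) + Real.sqrt (F - 2*D) :=
    add_nonneg (Real.sqrt_nonneg _) (Real.sqrt_nonneg _)
  have hR : 0 ≤ Real.sqrt (2*x) + Real.sqrt (2*y) :=
    add_nonneg (Real.sqrt_nonneg _) (Real.sqrt_nonneg _)
  nlinarith [hsq, hL, hR]

lemma ineq2 {T : Matrix (Fin 2) (Fin 2) ℂ →ₗ[ℂ] Matrix (Fin 2) (Fin 2) ℂ}
    (hTpos : IsPositiveMatrixMap T) (hTtr : IsTracePreservingMap T)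
    {A : Matrix (Fin 2) (Fin 2) ℂ} (htr : A.trace = 0) :
    Real.sqrt (frob (T A) + 2 * ‖(T A).det‖)
      + Real.sqrt (frob (T A) - 2 * ‖(T A).det‖)
    ≤ Real.sqrt (frob A + 2 * ‖A.det‖)
      + Real.sqrt (frob A - 2 * ‖A.det‖) := by
  obtain ⟨c, hc, hcz⟩ := exists_unit_sq A.det
  set A' : Matrix (Fin 2) (Fin 2) ℂ := c • A with hA'
  have htrA' : A'.trace = 0 := by rw [hA', Matrix.trace_smul, htr, smul_zero]
  have hdetA' : A'.det = ((‖A.det‖ : ℝ) : ℂ) := by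
    rw [hA', Matrix.det_smul, Fintype.card_fin, hcz]
  have hfrobA' : frob A' = frob A := frob_smul_unit hc A
  -- A-side quantities
  set H : Matrix (Fin 2) (Fin 2) ℂ := Hmat 1 A' with hH
  set K : Matrix (Fin 2) (Fin 2) ℂ := Hmat (-Complex.I) A' with hK
  have hsplitA : frob A' = frob H + frob K := frob_split htrA'
  have hdreA : (A'.det).re = (frob K - frob H) / 2 := det_re_split htrA'
  have hDA : ‖A.det‖ = (frob K - frob H) / 2 := by
    rw [← hdreA, hdetA']; simp
  -- B side
  set B' : Matrix (Fin 2) (Fin 2) ℂ := c • (T A) with hB'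
  have hB'img : B' = T A' := by rw [hB', hA', T.map_smul]
  have htrB' : B'.trace = 0 := by
    rw [hB'img, hTtr A', htrA']
  have hfrobB' : frob B' = frob (T A) := frob_smul_unit hc (T A)
  have hdetB' : ‖B'.det‖ = ‖(T A).det‖ := by
    rw [hB', Matrix.det_smul, Fintype.card_fin, norm_mul, norm_pow]
    have : ‖c‖ = 1 := by
      rw [← Complex.sq_norm] at hc; nlinarith [norm_nonneg c]
    rw [this]; norm_num
  set H' : Matrix (Fin 2) (Fin 2) ℂ := Hmat 1 B' with hH'
  set K' : Matrix (Fin 2) (Fin 2) ℂ := Hmat (-Complex.I) B' with hK'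
  have hsplitB : frob B' = frob H' + frob K' := frob_split htrB'
  have hdreB : (B'.det).re = (frob K' - frob H') / 2 := det_re_split htrB'
  -- contraction
  have hHc : frob H' ≤ frob H := by
    rw [hH', hH, hB'img, ← hmat_image hTpos htrA' 1]
    exact frob_contract hTpos hTtr (hmat_herm 1 A') (hmat_trace 1 htrA')
  have hKc : frob K' ≤ frob K := by
    rw [hK', hK, hB'img, ← hmat_image hTpos htrA' (-Complex.I)]
    exact frob_contract hTpos hTtr (hmat_herm _ A') (hmat_trace _ htrA')
  -- assemble
  set D' : ℝ := ‖(T A).det‖ with hD'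
  have hD'0 : 0 ≤ D' := norm_nonneg _
  have habsB : |frob K' - frob H'| ≤ 2 * D' := by
    rw [← hdetB']
    have e : frob K' - frob H' = 2 * (B'.det).re := by rw [hdreB]; ring
    have h2 : |(2:ℝ)| = 2 := by norm_num
    rw [e, abs_mul, h2]
    exact mul_le_mul_of_nonneg_left (Complex.abs_re_le_norm _) (by norm_num)
  have hF' : frob (T A) = frob K' + frob H' := by
    rw [← hfrobB', hsplitB]; ring
  have step1 := sqrt_comb (frob_nonneg K') (frob_nonneg H') hF' hD'0 habsB
    (frob_ge_det (T A))
  have eA1 : frob A + 2 * ‖A.det‖ = 2 * frob K := by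
    rw [← hfrobA', hsplitA, hDA]; ring
  have eA2 : frob A - 2 * ‖A.det‖ = 2 * frob H := by
    rw [← hfrobA', hsplitA, hDA]; ring
  rw [eA1, eA2]
  have m1 : Real.sqrt (2 * frob K') ≤ Real.sqrt (2 * frob K) :=
    Real.sqrt_le_sqrt (by linarith)
  have m2 : Real.sqrt (2 * frob H') ≤ Real.sqrt (2 * frob H) :=
    Real.sqrt_le_sqrt (by linarith)
  calc Real.sqrt (frob (T A) + 2 * D') + Real.sqrt (frob (T A) - 2 * D')
      ≤ Real.sqrt (2 * frob K') + Real.sqrt (2 * frob H') := step1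
    _ ≤ Real.sqrt (2 * frob K) + Real.sqrt (2 * frob H) := add_le_add m1 m2

end Aux
noncomputable def sig1 (A : Matrix (Fin 2) (Fin 2) ℂ) : ℝ :=
  (Real.sqrt (frob A + 2 * ‖A.det‖) + Real.sqrt (frob A - 2 * ‖A.det‖)) / 2

noncomputable def sig2 (A : Matrix (Fin 2) (Fin 2) ℂ) : ℝ :=
  (Real.sqrt (frob A + 2 * ‖A.det‖) - Real.sqrt (frob A - 2 * ‖A.det‖)) / 2

lemma sv_facts (A : Matrix (Fin 2) (Fin 2) ℂ) :
    singularValues A 0 + singularValues A 1 = Real.sqrt (frob A + 2 * ‖A.det‖) ∧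
    |singularValues A 0 - singularValues A 1| = Real.sqrt (frob A - 2 * ‖A.det‖) := by
  have hs := sv_sq_add A
  have hm := sv_mul A
  have h0 := sv_nonneg A 0
  have h1 := sv_nonneg A 1
  constructor
  · have : frob A + 2 * ‖A.det‖ = (singularValues A 0 + singularValues A 1)^2 := by
      rw [← hs, ← hm]; ring
    rw [this, Real.sqrt_sq (by linarith)]
  · have : frob A - 2 * ‖A.det‖ = (singularValues A 0 - singularValues A 1)^2 := by
      rw [← hs, ← hm]; ring
    rw [this, Real.sqrt_sq_eq_abs]

lemma sig2_nonneg (A : Matrix (Fin 2) (Fin 2) ℂ) : 0 ≤ sig2 A := by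
  obtain ⟨e1, e2⟩ := sv_facts A
  have h0 := sv_nonneg A 0
  have h1 := sv_nonneg A 1
  unfold sig2
  rw [← e1, ← e2]
  rcases abs_cases (singularValues A 0 - singularValues A 1) with ⟨h, -⟩ | ⟨h, -⟩ <;>
    rw [h] <;> linarith

lemma sig2_le_sig1 (A : Matrix (Fin 2) (Fin 2) ℂ) : sig2 A ≤ sig1 A := by
  unfold sig1 sig2
  have := Real.sqrt_nonneg (frob A - 2 * ‖A.det‖)
  linarith

lemma sv_max_min (A : Matrix (Fin 2) (Fin 2) ℂ) :
    (singularValues A 0 = sig1 A ∧ singularValues A 1 = sig2 A) ∨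
    (singularValues A 0 = sig2 A ∧ singularValues A 1 = sig1 A) := by
  obtain ⟨e1, e2⟩ := sv_facts A
  unfold sig1 sig2
  rw [← e1, ← e2]
  rcases le_total (singularValues A 1) (singularValues A 0) with h | h
  · left
    rw [_root_.abs_of_nonneg (by linarith : (0:ℝ) ≤ singularValues A 0 - singularValues A 1)]
    constructor <;> ring
  · right
    rw [abs_of_nonpos (by linarith : singularValues A 0 - singularValues A 1 ≤ (0:ℝ))]
    constructor <;> ring

lemma schatten_top (A : Matrix (Fin 2) (Fin 2) ℂ) : schattenNorm ⊤ A = sig1 A := by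
  rw [schattenNorm, if_pos rfl, fin2_sup]
  rcases sv_max_min A with ⟨ha, hb⟩ | ⟨ha, hb⟩ <;> rw [ha, hb]
  · exact max_eq_left (le_trans (sig2_le_sig1 A) (le_refl _))
  · exact max_eq_right (sig2_le_sig1 A)

lemma schatten_ne_top (A : Matrix (Fin 2) (Fin 2) ℂ) {p : ℝ≥0∞} (hp : p ≠ ⊤) :
    schattenNorm p A = (sig1 A ^ p.toReal + sig2 A ^ p.toReal) ^ (1 / p.toReal) := by
  rw [schattenNorm, if_neg hp, Fin.sum_univ_two]
  rcases sv_max_min A with ⟨ha, hb⟩ | ⟨ha, hb⟩ <;> rw [ha, hb]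
  ring_nf

/-- **Qubit case.** For any positive trace preserving `T : M_2(ℂ) → M_2(ℂ)`, any
`1 ≤ p ≤ ∞` and any (not necessarily Hermitian) traceless `A ∈ M_2(ℂ)`,
`‖T(A)‖_p ≤ ‖A‖_p`. -/
theorem qubit_traceless_contractive
    (T : Matrix (Fin 2) (Fin 2) ℂ →ₗ[ℂ] Matrix (Fin 2) (Fin 2) ℂ)
    (hTpos : IsPositiveMatrixMap T) (hTtr : IsTracePreservingMap T)
    (p : ℝ≥0∞) (hp : 1 ≤ p)
    (A : Matrix (Fin 2) (Fin 2) ℂ) (hA0 : A.trace = 0) :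
    schattenNorm p (T A) ≤ schattenNorm p A := by
  have hI1 := ineq1 hTpos hTtr hA0
  have hI2 := ineq2 hTpos hTtr hA0
  -- sig1 (T A) ≤ sig1 A
  have hsig1 : sig1 (T A) ≤ sig1 A := by
    unfold sig1; linarith
  -- sig1 + sig2 contraction
  have hsum : sig1 (T A) + sig2 (T A) ≤ sig1 A + sig2 A := by
    unfold sig1 sig2
    have := Real.sqrt_le_sqrt hI1
    linarith
  by_cases hptop : p = ⊤
  · rw [hptop, schatten_top, schatten_top]
    exact hsig1
  · rw [schatten_ne_top (T A) hptop, schatten_ne_top A hptop]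
    have hq : 1 ≤ p.toReal := by
      have := ENNReal.toReal_mono hptop hp
      simpa using this
    have hq0 : 0 ≤ 1 / p.toReal := by positivity
    apply Real.rpow_le_rpow _ _ hq0
    · apply add_nonneg <;>
        exact Real.rpow_nonneg (by
          first
          | exact le_trans (sig2_nonneg _) (sig2_le_sig1 _)
          | exact sig2_nonneg _) _
    · exact karamata2 hq (sig2_nonneg A) (sig2_le_sig1 A) (sig2_nonneg (T A))
        (sig2_le_sig1 (T A)) hsig1 hsum
end

section
/- Let T : M_2(ℂ) → M_2(ℂ) be a positive trace preserving linear map, written in Bloch form as T(𝟙 + w·σ) = 𝟙 + (r + Rw)·σ for some r ∈ ℝ³ and real 3×3 matrix R (where σ = (σ₁,σ₂,σ₃) are the Pauli matrices). Then the unital trace preserving linear map T₁ defined by T₁(𝟙 + w·σ) = 𝟙 + (Rw)·σ is also positive. -/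
open scoped ComplexOrder

/-- The Pauli matrices `σ₁, σ₂, σ₃`. -/
def pauli : Fin 3 → Matrix (Fin 2) (Fin 2) ℂ
  | 0 => !![0, 1; 1, 0]
  | 1 => !![0, -Complex.I; Complex.I, 0]
  | 2 => !![1, 0; 0, -1]

/-- The Bloch parametrization `𝟙 + w·σ`, `w ∈ ℝ³`. -/
noncomputable def bloch (w : Fin 3 → ℝ) : Matrix (Fin 2) (Fin 2) ℂ :=
  1 + ∑ i, (w i : ℂ) • pauli i

open Matrix

lemma bloch_apply (w : Fin 3 → ℝ) :
    bloch w = !![(1 + w 2 : ℂ), (w 0 : ℂ) - w 1 * Complex.I;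
      (w 0 : ℂ) + w 1 * Complex.I, 1 - w 2] := by
  unfold bloch pauli
  ext i j
  fin_cases i <;> fin_cases j <;>
    simp [Fin.sum_univ_three, Matrix.one_apply] <;> ring

lemma bloch_posSemidef (w : Fin 3 → ℝ) (h : w 0 ^ 2 + w 1 ^ 2 + w 2 ^ 2 ≤ 1) :
    (bloch w).PosSemidef := by
  rw [bloch_apply, Matrix.posSemidef_iff_dotProduct_mulVec]
  constructor
  · ext i j
    fin_cases i <;> fin_cases j <;>
      simp [Matrix.conjTranspose_apply, Complex.ext_iff]
  · intro x
    have hx : star x ⬝ᵥ (!![(1 + w 2 : ℂ), (w 0 : ℂ) - w 1 * Complex.I;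
        (w 0 : ℂ) + w 1 * Complex.I, 1 - w 2] *ᵥ x)
        = (starRingEnd ℂ) (x 0) * ((1 + w 2) * x 0 + ((w 0 : ℂ) - w 1 * Complex.I) * x 1)
        + (starRingEnd ℂ) (x 1) * (((w 0 : ℂ) + w 1 * Complex.I) * x 0 + (1 - w 2) * x 1) := by
      simp [dotProduct, Matrix.mulVec, Fin.sum_univ_two]
    rw [hx]
    rw [Complex.le_def]
    obtain ⟨pr, pi⟩ := x 0
    obtain ⟨qr, qi⟩ := x 1
    set a := w 0; set b := w 1; set c := w 2
    constructor
    · simp [Complex.ext_iff, Complex.add_re, Complex.mul_re, Complex.mul_im]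
      nlinarith [sq_nonneg (a*pr - b*pi + (1-c)*qr), sq_nonneg (a*pi + b*pr + (1-c)*qi),
        sq_nonneg (a*qr + b*qi + (1+c)*pr), sq_nonneg (a*qi - b*qr + (1+c)*pi),
        mul_nonneg (add_nonneg (sq_nonneg pr) (sq_nonneg pi)) (sub_nonneg.2 h),
        mul_nonneg (add_nonneg (sq_nonneg qr) (sq_nonneg qi)) (sub_nonneg.2 h)]
    · simp [Complex.ext_iff, Complex.add_im, Complex.mul_re, Complex.mul_im]
      ring

lemma norm_le_of_bloch_posSemidef (w : Fin 3 → ℝ) (h : (bloch w).PosSemidef) :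
    w 0 ^ 2 + w 1 ^ 2 + w 2 ^ 2 ≤ 1 := by
  rw [bloch_apply] at h
  set a := w 0; set b := w 1; set c := w 2
  have h1 := h.dotProduct_mulVec_nonneg ![(a : ℂ) - b * Complex.I, ((-(1+c) : ℝ) : ℂ)]
  have h2 := h.dotProduct_mulVec_nonneg ![((-(1-c) : ℝ) : ℂ), (a : ℂ) + b * Complex.I]
  simp [dotProduct, Matrix.mulVec, Fin.sum_univ_two, Complex.le_def,
    Complex.add_re, Complex.mul_re, Complex.mul_im] at h1 h2
  obtain ⟨h1, -⟩ := h1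
  obtain ⟨h2, -⟩ := h2
  nlinarith [h1, h2]

lemma smul_posSemidef {A : Matrix (Fin 2) (Fin 2) ℂ} (hA : A.PosSemidef) {t : ℝ} (ht : 0 ≤ t) :
    ((t : ℂ) • A).PosSemidef := by
  rw [Matrix.posSemidef_iff_dotProduct_mulVec]
  constructor
  · show ((t : ℂ) • A)ᴴ = _
    rw [Matrix.conjTranspose_smul, hA.1]
    simp
  · intro x
    have := hA.dotProduct_mulVec_nonneg x
    rw [Matrix.smul_mulVec, dotProduct_smul]
    exact mul_nonneg (by exact_mod_cast Complex.zero_le_real.2 ht) this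

lemma eq_zero_of_trace_eq_zero (A : Matrix (Fin 2) (Fin 2) ℂ) (hA : A.PosSemidef)
    (ht : (A 0 0).re + (A 1 1).re = 0) : A = 0 := by
  have hd0 : 0 ≤ A 0 0 := by
    simpa [dotProduct, Matrix.mulVec, Fin.sum_univ_two] using hA.dotProduct_mulVec_nonneg ![1, 0]
  have hd1 : 0 ≤ A 1 1 := by
    simpa [dotProduct, Matrix.mulVec, Fin.sum_univ_two] using hA.dotProduct_mulVec_nonneg ![0, 1]
  rw [Complex.le_def] at hd0 hd1
  simp only [Complex.zero_re, Complex.zero_im] at hd0 hd1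
  have e0 : A 0 0 = 0 := by
    rw [Complex.ext_iff]; simp only [Complex.zero_re, Complex.zero_im]
    exact ⟨by linarith [hd0.1, hd1.1], hd0.2.symm⟩
  have e1 : A 1 1 = 0 := by
    rw [Complex.ext_iff]; simp only [Complex.zero_re, Complex.zero_im]
    exact ⟨by linarith [hd0.1, hd1.1], hd1.2.symm⟩
  have h10 : A 1 0 = (starRingEnd ℂ) (A 0 1) := by
    have := congrFun (congrFun hA.1 1) 0
    simpa [Matrix.conjTranspose_apply] using this.symm
  have hq := hA.dotProduct_mulVec_nonneg ![1, -(starRingEnd ℂ) (A 0 1)]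
  simp [dotProduct, Matrix.mulVec, Fin.sum_univ_two, e0, e1, h10] at hq
  rw [Complex.le_def] at hq
  obtain ⟨hq, -⟩ := hq
  simp [Complex.mul_re] at hq
  have hre : (A 0 1).re * (A 0 1).re + (A 0 1).im * (A 0 1).im ≤ 0 := by nlinarith [hq]
  have e01 : A 0 1 = 0 := by
    rw [Complex.ext_iff]
    constructor
    · exact mul_self_eq_zero.mp
        (le_antisymm (by nlinarith [mul_self_nonneg (A 0 1).im]) (mul_self_nonneg _))
    · exact mul_self_eq_zero.mp
        (le_antisymm (by nlinarith [mul_self_nonneg (A 0 1).re]) (mul_self_nonneg _))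
  ext i j
  fin_cases i <;> fin_cases j <;> simp [e0, e1, e01, h10]

lemma bloch_decomposition (A : Matrix (Fin 2) (Fin 2) ℂ) (x y u v t : ℝ)
    (htne : t ≠ 0) (ht : t = x + y)
    (hA00 : A 0 0 = (x : ℂ)) (hA11 : A 1 1 = (y : ℂ))
    (hA01 : A 0 1 = (u : ℂ) + v * Complex.I) (hA10 : A 1 0 = (u : ℂ) - v * Complex.I) :
    A = ((t / 2 : ℝ) : ℂ) • bloch ![2 * u / t, -2 * v / t, (x - y) / t] := by
  have htC : (t : ℂ) ≠ 0 := by exact_mod_cast htne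
  rw [bloch_apply]
  ext i j
  fin_cases i <;> fin_cases j <;>
    · simp [hA00, hA11, hA01, hA10]
      field_simp
      subst ht; push_cast; ring

/-- Let `T : M₂(ℂ) → M₂(ℂ)` be a positive trace preserving map, acting in Bloch form as
`T(𝟙 + w·σ) = 𝟙 + (r + Rw)·σ` with `r ∈ ℝ³` and `R` a real `3×3` matrix.  Then the unital
trace preserving map `T₁` with `T₁(𝟙 + w·σ) = 𝟙 + (Rw)·σ` is also positive. -/
theorem unital_part_of_qubit_map_positive
    (T T₁ : Matrix (Fin 2) (Fin 2) ℂ →ₗ[ℂ] Matrix (Fin 2) (Fin 2) ℂ)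
    (hTpos : IsPositiveMatrixMap T) (hTtr : IsTracePreservingMap T)
    (r : Fin 3 → ℝ) (R : Matrix (Fin 3) (Fin 3) ℝ)
    (hT : ∀ w : Fin 3 → ℝ, T (bloch w) = bloch (r + R.mulVec w))
    (hT₁unital : T₁ 1 = 1) (hT₁tr : IsTracePreservingMap T₁)
    (hT₁ : ∀ w : Fin 3 → ℝ, T₁ (bloch w) = bloch (R.mulVec w)) :
    IsPositiveMatrixMap T₁ := by
  intro A hA
  have hd0 : 0 ≤ A 0 0 := by
    simpa [dotProduct, Matrix.mulVec, Fin.sum_univ_two] using hA.dotProduct_mulVec_nonneg ![1, 0]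
  have hd1 : 0 ≤ A 1 1 := by
    simpa [dotProduct, Matrix.mulVec, Fin.sum_univ_two] using hA.dotProduct_mulVec_nonneg ![0, 1]
  rw [Complex.le_def] at hd0 hd1
  simp only [Complex.zero_re, Complex.zero_im] at hd0 hd1
  have ht : 0 ≤ (A 0 0).re + (A 1 1).re := by linarith [hd0.1, hd1.1]
  rcases eq_or_lt_of_le ht with ht0 | htpos
  · -- trace zero: A = 0
    have hA0 : A = 0 := eq_zero_of_trace_eq_zero A hA ht0.symm
    rw [hA0, map_zero]
    exact Matrix.PosSemidef.zero
  · -- trace positive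
    set t : ℝ := (A 0 0).re + (A 1 1).re with ht_def
    have htne : t ≠ 0 := ne_of_gt htpos
    have h10 : A 1 0 = (starRingEnd ℂ) (A 0 1) := by
      have := congrFun (congrFun hA.1 1) 0
      simpa [Matrix.conjTranspose_apply] using this.symm
    have hA00 : A 0 0 = ((A 0 0).re : ℂ) := by
      rw [Complex.ext_iff]; simp [hd0.2.symm]
    have hA11 : A 1 1 = ((A 1 1).re : ℂ) := by
      rw [Complex.ext_iff]; simp [hd1.2.symm]
    have hA01 : A 0 1 = ((A 0 1).re : ℂ) + (A 0 1).im * Complex.I := by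
      rw [Complex.ext_iff]; simp
    have hA10 : A 1 0 = ((A 0 1).re : ℂ) - (A 0 1).im * Complex.I := by
      rw [h10, Complex.ext_iff]; simp
    set w : Fin 3 → ℝ := ![2 * (A 0 1).re / t, -2 * (A 0 1).im / t,
      ((A 0 0).re - (A 1 1).re) / t] with hw_def
    have hAw : A = ((t / 2 : ℝ) : ℂ) • bloch w :=
      bloch_decomposition A (A 0 0).re (A 1 1).re (A 0 1).re (A 0 1).im t
        htne ht_def hA00 hA11 hA01 hA10
    have hblochw : (bloch w).PosSemidef := by
      have h1 : ((2 / t : ℝ) : ℂ) • A = bloch w := by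
        rw [hAw, smul_smul, ← Complex.ofReal_mul,
          show (2 / t) * (t / 2) = 1 by field_simp, Complex.ofReal_one, one_smul]
      rw [← h1]
      exact smul_posSemidef hA (by positivity)
    have hwnorm : w 0 ^ 2 + w 1 ^ 2 + w 2 ^ 2 ≤ 1 := norm_le_of_bloch_posSemidef w hblochw
    have hnegw : (bloch (-w)).PosSemidef := by
      apply bloch_posSemidef
      simp only [Pi.neg_apply, neg_sq]
      exact hwnorm
    have hplus := hTpos _ hblochw
    have hminus := hTpos _ hnegw
    rw [hT w] at hplus
    rw [hT (-w), Matrix.mulVec_neg] at hminus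
    have f1 := norm_le_of_bloch_posSemidef _ hplus
    have f2 := norm_le_of_bloch_posSemidef _ hminus
    simp only [Pi.add_apply, Pi.neg_apply] at f1 f2
    have hv : (R.mulVec w) 0 ^ 2 + (R.mulVec w) 1 ^ 2 + (R.mulVec w) 2 ^ 2 ≤ 1 := by
      nlinarith [f1, f2, sq_nonneg (r 0), sq_nonneg (r 1), sq_nonneg (r 2)]
    rw [hAw, _root_.map_smul, hT₁ w]
    exact smul_posSemidef (bloch_posSemidef _ hv) (by positivity)
end

section
/- Let T : M_3(ℂ) → M_3(ℂ) be a positive trace preserving linear map. Then for every Hermitian A ∈ M_3(ℂ) with tr A = 0, ‖T(A)‖_∞ ≤ ‖A‖_∞ (contractivity on the traceless Hermitian hyperplane holds for qutrits at p = ∞). -/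
open scoped ENNReal ComplexOrder

section Aux
open Matrix

noncomputable def conjD {n : ℕ} (U : Matrix (Fin n) (Fin n) ℂ) (d : Fin n → ℝ) :
    Matrix (Fin n) (Fin n) ℂ :=
  U * Matrix.diagonal (fun i => (d i : ℂ)) * star U

section conjD
variable {n : ℕ} {U : Matrix (Fin n) (Fin n) ℂ}

lemma conjD_add (d e : Fin n → ℝ) : conjD U (d + e) = conjD U d + conjD U e := by
  simp [conjD, ← Matrix.diagonal_add, mul_add, add_mul]

lemma conjD_sub (d e : Fin n → ℝ) : conjD U (d - e) = conjD U d - conjD U e := by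
  simp [conjD, ← Matrix.diagonal_sub, mul_sub, sub_mul]

lemma conjD_mul (hU : U ∈ Matrix.unitaryGroup (Fin n) ℂ) (d e : Fin n → ℝ) :
    conjD U (d * e) = conjD U d * conjD U e := by
  have h1 : star U * U = 1 := (Matrix.mem_unitaryGroup_iff').mp hU
  have key : ∀ X : Matrix (Fin n) (Fin n) ℂ, star U * (U * X) = X := fun X => by
    rw [← mul_assoc, h1, one_mul]
  simp only [conjD, mul_assoc]
  rw [key, ← mul_assoc (Matrix.diagonal fun i => ((d i : ℂ))), Matrix.diagonal_mul_diagonal]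
  norm_num [Pi.mul_apply]

lemma conjD_const (hU : U ∈ Matrix.unitaryGroup (Fin n) ℂ) (c : ℝ) :
    conjD U (fun _ => c) = (c : ℂ) • 1 := by
  have h1 : U * star U = 1 := (Matrix.mem_unitaryGroup_iff).mp hU
  rw [conjD, ← Matrix.smul_one_eq_diagonal, mul_smul_comm, smul_mul_assoc, mul_one, h1]

lemma posSemidef_conjD_iff (hU : U ∈ Matrix.unitaryGroup (Fin n) ℂ) (d : Fin n → ℝ) :
    (conjD U d).PosSemidef ↔ ∀ i, 0 ≤ d i := by
  have h1 : star U * U = 1 := (Matrix.mem_unitaryGroup_iff').mp hU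
  constructor
  · intro h
    have h2 := h.conjTranspose_mul_mul_same U
    have key : ∀ X : Matrix (Fin n) (Fin n) ℂ, star U * (U * X) = X := fun X => by
      rw [← mul_assoc, h1, one_mul]
    rw [conjD, ← Matrix.star_eq_conjTranspose] at h2
    simp only [mul_assoc] at h2
    rw [key] at h2
    rw [show Matrix.diagonal (fun i => ((d i : ℂ))) * (star U * U)
        = Matrix.diagonal (fun i => ((d i : ℂ))) by rw [h1, mul_one]] at h2
    intro i
    have := Matrix.posSemidef_diagonal_iff.mp h2 i
    exact_mod_cast this
  · intro h
    have : (Matrix.diagonal (fun i => ((d i : ℂ)))).PosSemidef :=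
      Matrix.posSemidef_diagonal_iff.mpr fun i => by exact_mod_cast h i
    simpa [conjD, Matrix.star_eq_conjTranspose, mul_assoc] using this.mul_mul_conjTranspose_same U

lemma trace_conjD (hU : U ∈ Matrix.unitaryGroup (Fin n) ℂ) (d : Fin n → ℝ) :
    (conjD U d).trace = ((∑ i, d i : ℝ) : ℂ) := by
  have h1 : star U * U = 1 := (Matrix.mem_unitaryGroup_iff').mp hU
  rw [conjD, Matrix.trace_mul_cycle, h1, one_mul, Matrix.trace_diagonal]
  push_cast
  rfl

lemma spectral (M : Matrix (Fin n) (Fin n) ℂ) (hM : M.IsHermitian) :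
    M = conjD (hM.eigenvectorUnitary : Matrix (Fin n) (Fin n) ℂ) hM.eigenvalues := by
  exact hM.spectral_theorem

end conjD

section lemmas
variable {n : ℕ}

/-- `r•1 - M` in spectral form. -/
lemma smul_one_sub_eq (M : Matrix (Fin n) (Fin n) ℂ) (hM : M.IsHermitian) (r : ℝ) :
    (r : ℂ) • 1 - M = conjD (hM.eigenvectorUnitary : Matrix (Fin n) (Fin n) ℂ)
      ((fun _ => r) - hM.eigenvalues) := by
  rw [conjD_sub, conjD_const (hM.eigenvectorUnitary).2, ← spectral M hM]

lemma smul_one_add_eq (M : Matrix (Fin n) (Fin n) ℂ) (hM : M.IsHermitian) (r : ℝ) :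
    (r : ℂ) • 1 + M = conjD (hM.eigenvectorUnitary : Matrix (Fin n) (Fin n) ℂ)
      ((fun _ => r) + hM.eigenvalues) := by
  rw [conjD_add, conjD_const (hM.eigenvectorUnitary).2, ← spectral M hM]

/-- a PSD matrix is dominated by its (real) trace times the identity. -/
lemma trace_smul_one_sub_psd (M : Matrix (Fin n) (Fin n) ℂ) (hM : M.PosSemidef) (t : ℝ)
    (ht : M.trace = (t : ℂ)) : ((t : ℂ) • 1 - M).PosSemidef := by
  have hH := hM.isHermitian
  have htr : M.trace = ((∑ i, hH.eigenvalues i : ℝ) : ℂ) := by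
    conv_lhs => rw [spectral M hH]
    exact trace_conjD (hH.eigenvectorUnitary).2 _
  have hsum : ∑ i, hH.eigenvalues i = t := by
    have := htr.symm.trans ht; exact_mod_cast this
  rw [smul_one_sub_eq M hH, posSemidef_conjD_iff (hH.eigenvectorUnitary).2]
  intro i
  have h1 : hH.eigenvalues i ≤ ∑ j, hH.eigenvalues j :=
    Finset.single_le_sum (fun j _ => hM.eigenvalues_nonneg j) (Finset.mem_univ i)
  simp only [Pi.sub_apply]
  rw [hsum] at h1
  linarith

/-- band around zero controls all eigenvalues, hence the singular values. -/
lemma singularValues_le_of_band {B : Matrix (Fin n) (Fin n) ℂ} (hB : B.IsHermitian) {c : ℝ}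
    (hc : 0 ≤ c) (h1 : ((c : ℂ) • 1 - B).PosSemidef) (h2 : ((c : ℂ) • 1 + B).PosSemidef) :
    ∀ i, singularValues B i ≤ c := by
  set β := hB.eigenvalues with hβ
  rw [smul_one_sub_eq B hB] at h1
  rw [smul_one_add_eq B hB] at h2
  have hb1 := (posSemidef_conjD_iff (hB.eigenvectorUnitary).2 _).mp h1
  have hb2 := (posSemidef_conjD_iff (hB.eigenvectorUnitary).2 _).mp h2
  -- B² = BᴴB, with eigenvalues β² in the basis of B
  have hBB : Bᴴ * B = conjD (hB.eigenvectorUnitary : Matrix (Fin n) (Fin n) ℂ) (β * β) := by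
    rw [conjD_mul (hB.eigenvectorUnitary).2, ← spectral B hB, hB.eq]
  have hNps := Matrix.posSemidef_conjTranspose_mul_self B
  have hNH := hNps.isHermitian
  have hpsd : (((c ^ 2 : ℝ) : ℂ) • 1 - Bᴴ * B).PosSemidef := by
    rw [hBB, show ((c ^ 2 : ℝ) : ℂ) • (1 : Matrix (Fin n) (Fin n) ℂ)
        = conjD (hB.eigenvectorUnitary : Matrix (Fin n) (Fin n) ℂ) (fun _ => c ^ 2) from
      (conjD_const (hB.eigenvectorUnitary).2 _).symm, ← conjD_sub]
    rw [posSemidef_conjD_iff (hB.eigenvectorUnitary).2]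
    intro i
    have g1 := hb1 i
    have g2 := hb2 i
    simp only [Pi.sub_apply, Pi.add_apply, Pi.mul_apply] at g1 g2 ⊢
    nlinarith
  -- hence the eigenvalues of N are at most c²
  rw [smul_one_sub_eq (Bᴴ * B) hNH] at hpsd
  have hev := (posSemidef_conjD_iff (hNH.eigenvectorUnitary).2 _).mp hpsd
  intro i
  have h3 : hNH.eigenvalues i ≤ c ^ 2 := by
    have := hev i; simp only [Pi.sub_apply] at this; linarith
  calc singularValues B i = Real.sqrt (hNH.eigenvalues i) := rfl
    _ ≤ Real.sqrt (c ^ 2) := Real.sqrt_le_sqrt h3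
    _ = c := by rw [Real.sqrt_sq hc]

/-- conversely: bound on the singular values bounds the absolute value of eigenvalues. -/
lemma abs_eigenvalues_le {A : Matrix (Fin n) (Fin n) ℂ} (hA : A.IsHermitian) {c : ℝ}
    (hc : 0 ≤ c) (h : ∀ i, singularValues A i ≤ c) : ∀ i, |hA.eigenvalues i| ≤ c := by
  set lam := hA.eigenvalues with hlam
  have hNps := Matrix.posSemidef_conjTranspose_mul_self A
  have hNH := hNps.isHermitian
  have hev : ∀ i, hNH.eigenvalues i ≤ c ^ 2 := by
    intro i
    have h0 := hNps.eigenvalues_nonneg i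
    have h1 : Real.sqrt (hNH.eigenvalues i) ≤ c := h i
    nlinarith [Real.sq_sqrt h0, Real.sqrt_nonneg (hNH.eigenvalues i)]
  have hpsd : (((c ^ 2 : ℝ) : ℂ) • 1 - Aᴴ * A).PosSemidef := by
    rw [smul_one_sub_eq (Aᴴ * A) hNH, posSemidef_conjD_iff (hNH.eigenvectorUnitary).2]
    intro i; simp only [Pi.sub_apply]; linarith [hev i]
  have hAA : Aᴴ * A = conjD (hA.eigenvectorUnitary : Matrix (Fin n) (Fin n) ℂ) (lam * lam) := by
    rw [conjD_mul (hA.eigenvectorUnitary).2, ← spectral A hA, hA.eq]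
  rw [hAA, show ((c ^ 2 : ℝ) : ℂ) • (1 : Matrix (Fin n) (Fin n) ℂ)
      = conjD (hA.eigenvectorUnitary : Matrix (Fin n) (Fin n) ℂ) (fun _ => c ^ 2) from
    (conjD_const (hA.eigenvectorUnitary).2 _).symm, ← conjD_sub,
    posSemidef_conjD_iff (hA.eigenvectorUnitary).2] at hpsd
  intro i
  have := hpsd i
  simp only [Pi.sub_apply, Pi.mul_apply] at this
  rw [abs_le]
  constructor <;> nlinarith

end lemmas

lemma key3 (a b c m : ℝ) (h : a + b + c = 0) (ha : |a| ≤ m) (hb : |b| ≤ m) (hc : |c| ≤ m) :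
    max a 0 + max b 0 + max c 0 ≤ m := by
  rw [abs_le] at ha hb hc
  simp only [max_def]
  split_ifs <;> linarith

lemma smul_one_psd {n : ℕ} {r : ℝ} (hr : 0 ≤ r) :
    ((r : ℂ) • (1 : Matrix (Fin n) (Fin n) ℂ)).PosSemidef := by
  rw [Matrix.smul_one_eq_diagonal]
  exact Matrix.posSemidef_diagonal_iff.mpr fun i => by exact_mod_cast hr


end Aux

/-- **Qutrits, `p = ∞`.** For any positive trace preserving `T : M₃(ℂ) → M₃(ℂ)` and any
traceless Hermitian `A ∈ M₃(ℂ)`, `‖T(A)‖_∞ ≤ ‖A‖_∞`. -/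
theorem qutrit_traceless_contractive_infty
    (T : Matrix (Fin 3) (Fin 3) ℂ →ₗ[ℂ] Matrix (Fin 3) (Fin 3) ℂ)
    (hTpos : IsPositiveMatrixMap T) (hTtr : IsTracePreservingMap T)
    (A : Matrix (Fin 3) (Fin 3) ℂ) (hA : A.IsHermitian) (hA0 : A.trace = 0) :
    schattenNorm ⊤ (T A) ≤ schattenNorm ⊤ A := by
  simp only [schattenNorm, reduceIte]
  set c := ⨆ i, singularValues A i with hc
  have hsvA : ∀ i, singularValues A i ≤ c :=
    fun i => le_ciSup (Set.Finite.bddAbove (Set.finite_range _)) i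
  have hc0 : 0 ≤ c := le_trans (Real.sqrt_nonneg _) (hsvA 0)
  have hlam : ∀ i, |hA.eigenvalues i| ≤ c := abs_eigenvalues_le hA hc0 hsvA
  have hV := (hA.eigenvectorUnitary).2
  -- sum of eigenvalues is zero
  have hsum0 : ∑ i, hA.eigenvalues i = 0 := by
    have htr : A.trace = ((∑ i, hA.eigenvalues i : ℝ) : ℂ) := by
      conv_lhs => rw [spectral A hA]
      exact trace_conjD hV _
    rw [hA0] at htr
    exact_mod_cast htr.symm
  -- positive and negative parts
  have hdiff : (fun i => max (hA.eigenvalues i) 0) - (fun i => max (-hA.eigenvalues i) 0)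
      = hA.eigenvalues := by
    funext i
    simp only [Pi.sub_apply]
    rcases le_total (hA.eigenvalues i) 0 with h | h
    · rw [max_eq_right h, max_eq_left (neg_nonneg.mpr h)]; ring
    · rw [max_eq_left h, max_eq_right (neg_nonpos.mpr h)]; ring
  set t := ∑ i, max (hA.eigenvalues i) 0 with ht
  have htm : ∑ i, max (-hA.eigenvalues i) 0 = t := by
    have h1 : ∑ i, ((fun i => max (hA.eigenvalues i) 0) - fun i => max (-hA.eigenvalues i) 0) i
        = 0 := by rw [hdiff]; exact hsum0
    simp only [Pi.sub_apply, Finset.sum_sub_distrib] at h1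
    rw [ht]; linarith
  have htc : t ≤ c := by
    have hsum3 : hA.eigenvalues 0 + hA.eigenvalues 1 + hA.eigenvalues 2 = 0 := by
      have h' := hsum0; rwa [Fin.sum_univ_three] at h'
    have h := key3 (hA.eigenvalues 0) (hA.eigenvalues 1) (hA.eigenvalues 2) c
      hsum3 (hlam 0) (hlam 1) (hlam 2)
    rw [ht, Fin.sum_univ_three]
    linarith
  -- the PSD decomposition A = P - Q
  set V := (hA.eigenvectorUnitary : Matrix (Fin 3) (Fin 3) ℂ) with hVdef
  set P := conjD V (fun i => max (hA.eigenvalues i) 0) with hP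
  set Q := conjD V (fun i => max (-hA.eigenvalues i) 0) with hQ
  have hPQ : A = P - Q := by
    rw [hP, hQ, ← conjD_sub, hdiff]; exact spectral A hA
  have hPps : P.PosSemidef := (posSemidef_conjD_iff hV _).mpr fun i => le_max_right _ _
  have hQps : Q.PosSemidef := (posSemidef_conjD_iff hV _).mpr fun i => le_max_right _ _
  have hPtr : P.trace = (t : ℂ) := trace_conjD hV _
  have hQtr : Q.trace = (t : ℂ) := by
    rw [hQ, trace_conjD hV _, htm]
  have hTP := hTpos P hPps
  have hTQ := hTpos Q hQps
  have hTPdom : ((t : ℂ) • 1 - T P).PosSemidef :=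
    trace_smul_one_sub_psd _ hTP t ((hTtr P).trans hPtr)
  have hTQdom : ((t : ℂ) • 1 - T Q).PosSemidef :=
    trace_smul_one_sub_psd _ hTQ t ((hTtr Q).trans hQtr)
  have hTA : T A = T P - T Q := by rw [hPQ, map_sub]
  have hBH : (T A).IsHermitian := by
    rw [hTA]; exact hTP.isHermitian.sub hTQ.isHermitian
  have h1 : ((c : ℂ) • 1 - T A).PosSemidef := by
    have e : (c : ℂ) • (1 : Matrix (Fin 3) (Fin 3) ℂ) - T A
        = ((c - t : ℝ) : ℂ) • 1 + ((t : ℂ) • 1 - T P) + T Q := by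
      rw [hTA]; push_cast; module
    rw [e]
    exact ((smul_one_psd (by linarith)).add hTPdom).add hTQ
  have h2 : ((c : ℂ) • 1 + T A).PosSemidef := by
    have e : (c : ℂ) • (1 : Matrix (Fin 3) (Fin 3) ℂ) + T A
        = ((c - t : ℝ) : ℂ) • 1 + ((t : ℂ) • 1 - T Q) + T P := by
      rw [hTA]; push_cast; module
    rw [e]
    exact ((smul_one_psd (by linarith)).add hTQdom).add hTP
  exact ciSup_le (singularValues_le_of_band hBH hc0 h1 h2)
end
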